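/- arXiv:1506.00160 — 7 statements merged into one kernel-verified Lean document; each statement's English description precedes it below -/
import Mathlib

section
/- Let d, h be positive integers and let F_1,…,F_h ∈ ℤ[x_1,…,x_d] be nonzero polynomials that are not relatively prime in ℚ[x_1,…,x_d], i.e., some prime element of ℚ[x_1,…,x_d] divides all of them. Then lim_{k→∞} (2k+1)^{−d} · #{x ∈ Box(k)^d : gcd(F_1(x), F_2(x), …, F_h(x)) = 1} = 0. -/
open Filter MvPolynomial

open Finset in

lemma count_zeros : ∀ (n : ℕ) (P : MvPolynomial (Fin n) ℤ), P ≠ 0 → ∀ (S : Finset ℤ),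
    ((Fintype.piFinset fun _ : Fin n => S).filter fun x => eval x P = 0).card * S.card
      ≤ P.totalDegree * S.card ^ n := by
  intro n
  induction n with
  | zero =>
    intro P hP S
    have he : ((Fintype.piFinset fun _ : Fin 0 => S).filter fun x => eval x P = 0) = ∅ := by
      ext x
      simp only [mem_filter, notMem_empty, iff_false, not_and]
      intro _
      obtain ⟨a, rfl⟩ := C_surjective (Fin 0) P
      simp only [eval_C]
      intro h
      exact hP (by rw [h, map_zero])
    rw [he]
    simp
  | succ n ih =>
    intro P hP S
    set Q := finSuccEquiv ℤ n P with hQdef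
    have hQ0 : Q ≠ 0 := by
      intro h
      exact hP ((map_eq_zero_iff _ (AlgEquiv.injective _)).mp h)
    set c := Q.leadingCoeff with hcdef
    have hc0 : c ≠ 0 := Polynomial.leadingCoeff_ne_zero.mpr hQ0
    set B := Fintype.piFinset fun _ : Fin n => S with hBdef
    have hBcard : B.card = S.card ^ n := by
      simp [hBdef, Fintype.card_piFinset]
    have key : ((Fintype.piFinset fun _ : Fin (n+1) => S).filter fun x => eval x P = 0).card
        ≤ ∑ y ∈ B, (S.filter fun a => eval (Fin.cons a y) P = 0).card := by
      rw [← Finset.card_sigma]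
      apply Finset.card_le_card_of_injOn (fun x => ⟨Fin.tail x, x 0⟩)
      · intro x hx
        simp only [Finset.mem_coe, mem_filter, Fintype.mem_piFinset] at hx
        simp only [Finset.mem_coe, Finset.mem_sigma, Fintype.mem_piFinset, mem_filter, hBdef]
        refine ⟨fun t => hx.1 _, hx.1 0, ?_⟩
        rw [Fin.cons_self_tail]
        exact hx.2
      · intro x _ x' _ hxx
        rw [Sigma.ext_iff] at hxx
        simp only at hxx
        have : Fin.cons (x 0) (Fin.tail x) = Fin.cons (x' 0) (Fin.tail x') := by
          rw [hxx.1, eq_of_heq hxx.2]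
        rwa [Fin.cons_self_tail, Fin.cons_self_tail] at this
    have hgood : ∀ y ∈ B, eval y c ≠ 0 →
        (S.filter fun a => eval (Fin.cons a y) P = 0).card ≤ Q.natDegree := by
      intro y _ hy
      have hmapne : Q.map (eval y) ≠ 0 := by
        intro h
        apply hy
        have h2 : (Q.map (eval y)).coeff Q.natDegree = eval y (Q.coeff Q.natDegree) :=
          Polynomial.coeff_map (eval y) Q.natDegree
        rw [h, Polynomial.coeff_zero] at h2
        exact h2.symm
      calc (S.filter fun a => eval (Fin.cons a y) P = 0).card
          ≤ (Q.map (eval y)).roots.toFinset.card := by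
            apply Finset.card_le_card
            intro a ha
            simp only [mem_filter] at ha
            rw [Multiset.mem_toFinset, Polynomial.mem_roots hmapne]
            rw [eval_eq_eval_mv_eval'] at ha
            exact ha.2
        _ ≤ Multiset.card (Q.map (eval y)).roots := Multiset.toFinset_card_le _
        _ ≤ (Q.map (eval y)).natDegree := Polynomial.card_roots' _
        _ ≤ Q.natDegree := Polynomial.natDegree_map_le
    have hsum : ∑ y ∈ B, (S.filter fun a => eval (Fin.cons a y) P = 0).card
        ≤ (B.filter fun y => eval y c = 0).card * S.card + B.card * Q.natDegree := by
      rw [← Finset.sum_filter_add_sum_filter_not B (fun y => eval y c = 0)]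
      refine Nat.add_le_add ?_ ?_
      · calc ∑ y ∈ B.filter fun y => eval y c = 0,
            (S.filter fun a => eval (Fin.cons a y) P = 0).card
            ≤ ∑ _y ∈ B.filter fun y => eval y c = 0, S.card :=
              Finset.sum_le_sum fun y _ => Finset.card_le_card (Finset.filter_subset _ _)
          _ = _ := by rw [Finset.sum_const, smul_eq_mul]
      · calc ∑ y ∈ B.filter fun y => ¬ eval y c = 0,
            (S.filter fun a => eval (Fin.cons a y) P = 0).card
            ≤ ∑ _y ∈ B.filter fun y => ¬ eval y c = 0, Q.natDegree := by
              apply Finset.sum_le_sum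
              intro y hy
              simp only [mem_filter] at hy
              exact hgood y hy.1 hy.2
          _ ≤ _ := by
              rw [Finset.sum_const, smul_eq_mul]
              exact Nat.mul_le_mul_right _ (Finset.card_le_card (Finset.filter_subset _ _))
    have hbad : (B.filter fun y => eval y c = 0).card * S.card ≤ c.totalDegree * S.card ^ n :=
      ih c hc0 S
    have hdeg : c.totalDegree + Q.natDegree ≤ P.totalDegree := by
      have := totalDegree_coeff_finSuccEquiv_add_le P Q.natDegree (by
        rw [← Polynomial.leadingCoeff]; exact hc0)
      exact this
    calc ((Fintype.piFinset fun _ : Fin (n+1) => S).filter fun x => eval x P = 0).card * S.card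
        ≤ ((B.filter fun y => eval y c = 0).card * S.card + B.card * Q.natDegree) * S.card := by
          exact Nat.mul_le_mul_right _ (key.trans hsum)
      _ ≤ (c.totalDegree * S.card ^ n + S.card ^ n * Q.natDegree) * S.card := by
          gcongr
          rw [hBcard]
      _ = (c.totalDegree + Q.natDegree) * S.card ^ (n + 1) := by ring
      _ ≤ P.totalDegree * S.card ^ (n + 1) := Nat.mul_le_mul_right _ hdeg

open Finset in

lemma clear_denoms (d : ℕ) (p : MvPolynomial (Fin d) ℚ) :
    ∃ (m : ℤ) (G : MvPolynomial (Fin d) ℤ), m ≠ 0 ∧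
      MvPolynomial.map (Int.castRingHom ℚ) G = C (m : ℚ) * p := by
  induction p using MvPolynomial.induction_on with
  | C a =>
    refine ⟨(a.den : ℤ), C a.num, ?_, ?_⟩
    · exact_mod_cast a.den_nz
    · rw [map_C]
      rw [← C_mul]
      congr 1
      push_cast
      rw [mul_comm]
      exact_mod_cast (Rat.mul_den_eq_num a).symm
  | add p q ihp ihq =>
    obtain ⟨m1, G1, hm1, h1⟩ := ihp
    obtain ⟨m2, G2, hm2, h2⟩ := ihq
    refine ⟨m1 * m2, C m2 * G1 + C m1 * G2, mul_ne_zero hm1 hm2, ?_⟩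
    rw [map_add, map_mul, map_mul, map_C, map_C, h1, h2]
    simp only [eq_intCast, Int.cast_mul]
    push_cast
    rw [C_mul]
    ring
  | mul_X p i ihp =>
    obtain ⟨m, G, hm, h⟩ := ihp
    exact ⟨m, G * X i, hm, by rw [map_mul, map_X, h]; ring⟩

set_option maxHeartbeats 800000 in
open Finset in
/-- If nonzero `F_1, …, F_h ∈ ℤ[x_1,…,x_d]` are not relatively prime in
`ℚ[x_1,…,x_d]` (some prime element divides all of them), then the density of
integer vectors `x` with `gcd(F_1(x), …, F_h(x)) = 1` is 0. -/
theorem stmt1 (d h : ℕ) (hd : 0 < d) (hh : 0 < h)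
    (F : Fin h → MvPolynomial (Fin d) ℤ) (hF : ∀ j, F j ≠ 0)
    (hncop : ∃ q : MvPolynomial (Fin d) ℚ, Prime q ∧
      ∀ j, q ∣ MvPolynomial.map (Int.castRingHom ℚ) (F j)) :
    Tendsto (fun k : ℕ =>
      (Nat.card {x : Fin d → ℤ //
          (∀ t, x t ∈ Set.Icc (-(k : ℤ)) (k : ℤ)) ∧
          Finset.gcd Finset.univ (fun j => eval x (F j)) = 1} : ℝ)
        / (2 * (k : ℝ) + 1) ^ d) atTop (nhds 0) := by
  obtain ⟨q, hqprime, hqdvd⟩ := hncop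
  obtain ⟨m, G, hm, hG⟩ := clear_denoms d q
  choose H hH using hqdvd
  choose M K hM hK using fun j => clear_denoms d (H j)
  have hcastinj : Function.Injective (Int.castRingHom ℚ) := Int.cast_injective
  have hrel : ∀ j, C (m * M j) * F j = G * K j := by
    intro j
    apply MvPolynomial.map_injective (Int.castRingHom ℚ) hcastinj
    simp only [map_mul, map_C, hG, hK, hH, eq_intCast, Int.cast_mul, C_mul, map_intCast]
    ring
  set N : ℤ := m * ∏ j, M j with hN
  have hN0 : N ≠ 0 := mul_ne_zero hm (Finset.prod_ne_zero_iff.mpr fun j _ => hM j)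
  have habs : (0:ℤ) < |N| := abs_pos.mpr hN0
  -- key divisibility
  have hkey : ∀ x : Fin d → ℤ, Finset.gcd Finset.univ (fun j => eval x (F j)) = 1 →
      eval x G ∈ Finset.Icc (-|N|) |N| := by
    intro x hx
    have hdvd : eval x G ∣ |N| := by
      have h1 : ∀ j, eval x G ∣ N * eval x (F j) := by
        intro j
        have heq := congrArg (eval x) (hrel j)
        rw [eval_mul, eval_mul, eval_C] at heq
        have h2 : eval x G ∣ (m * M j) * eval x (F j) := ⟨eval x (K j), heq⟩
        have h3 : (m * M j) ∣ N := mul_dvd_mul_left m (Finset.dvd_prod_of_mem _ (mem_univ j))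
        exact h2.trans (mul_dvd_mul_right h3 _)
      have h4 : eval x G ∣ Finset.gcd Finset.univ (fun j => N * eval x (F j)) :=
        Finset.dvd_gcd fun j _ => h1 j
      rwa [Finset.gcd_mul_left, hx, mul_one, ← Int.abs_eq_normalize] at h4
    rw [Finset.mem_Icc]
    constructor
    · have := Int.le_of_dvd habs ((neg_dvd).mpr hdvd)
      linarith
    · exact Int.le_of_dvd habs hdvd
  -- each shifted polynomial is nonzero
  have hnz : ∀ t : ℤ, G - C t ≠ 0 := by
    intro t hzero
    have hGt : G = C t := by rwa [sub_eq_zero] at hzero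
    have : C ((t : ℚ)) = C ((m : ℚ)) * q := by
      rw [← hG, hGt, map_C]; simp
    have hdq : q ∣ C ((t : ℚ)) := ⟨C ((m : ℚ)), by rw [this]; ring⟩
    rcases eq_or_ne t 0 with h0 | h0
    · subst h0
      simp only [Int.cast_zero, map_zero] at this
      rcases mul_eq_zero.mp this.symm with h1 | h1
      · exact hm (by exact_mod_cast (C_eq_zero.mp h1))
      · exact hqprime.ne_zero h1
    · have hunit : IsUnit (C ((t : ℚ)) : MvPolynomial (Fin d) ℚ) :=
        (isUnit_iff_ne_zero.mpr (by exact_mod_cast h0)).map (C : ℚ →+* _)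
      exact hqprime.not_unit (isUnit_of_dvd_unit hdq hunit)
  -- the box as finset
  set s : ℕ → Finset ℤ := fun k => Finset.Icc (-(k:ℤ)) k with hs
  have hscard : ∀ k : ℕ, (s k).card = 2 * k + 1 := by
    intro k
    rw [hs]
    simp only [Int.card_Icc]
    have : (k:ℤ) + 1 - -(k:ℤ) = ((2 * k + 1 : ℕ) : ℤ) := by push_cast; ring
    rw [this, Int.toNat_natCast]
  set C0 : ℕ := ∑ t ∈ Finset.Icc (-|N|) |N|, (G - C t).totalDegree with hC0
  -- natural number bound
  have hnat : ∀ k : ℕ, (Nat.card {x : Fin d → ℤ //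
      (∀ t, x t ∈ Set.Icc (-(k : ℤ)) (k : ℤ)) ∧
      Finset.gcd Finset.univ (fun j => eval x (F j)) = 1}) * (2 * k + 1)
      ≤ C0 * (2 * k + 1) ^ d := by
    intro k
    set U : Finset (Fin d → ℤ) := (Finset.Icc (-|N|) |N|).biUnion
      (fun t => (Fintype.piFinset fun _ : Fin d => s k).filter fun x => eval x (G - C t) = 0)
      with hU
    have hsub : {x : Fin d → ℤ |
        (∀ t, x t ∈ Set.Icc (-(k : ℤ)) (k : ℤ)) ∧
        Finset.gcd Finset.univ (fun j => eval x (F j)) = 1} ⊆ ↑U := by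
      intro x hx
      obtain ⟨hbox, hgcd⟩ := hx
      simp only [hU, coe_biUnion, Set.mem_iUnion, coe_filter, Set.mem_setOf_eq]
      refine ⟨eval x G, hkey x hgcd, ?_, ?_⟩
      · rw [Fintype.mem_piFinset]
        intro t
        rw [hs, Finset.mem_Icc]
        exact ⟨(hbox t).1, (hbox t).2⟩
      · rw [eval_sub, eval_C, sub_self]
    have hcard1 : Nat.card {x : Fin d → ℤ //
        (∀ t, x t ∈ Set.Icc (-(k : ℤ)) (k : ℤ)) ∧
        Finset.gcd Finset.univ (fun j => eval x (F j)) = 1} ≤ U.card := by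
      have e : Nat.card {x : Fin d → ℤ //
          (∀ t, x t ∈ Set.Icc (-(k : ℤ)) (k : ℤ)) ∧
          Finset.gcd Finset.univ (fun j => eval x (F j)) = 1} =
          Set.ncard {x : Fin d → ℤ |
          (∀ t, x t ∈ Set.Icc (-(k : ℤ)) (k : ℤ)) ∧
          Finset.gcd Finset.univ (fun j => eval x (F j)) = 1} :=
        Nat.card_coe_set_eq _
      rw [e]
      calc _ ≤ (↑U : Set (Fin d → ℤ)).ncard := Set.ncard_le_ncard hsub U.finite_toSet
        _ = U.card := Set.ncard_coe_finset U
    calc _ ≤ U.card * (2 * k + 1) :=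
          Nat.mul_le_mul_right _ hcard1
      _ ≤ (∑ t ∈ Finset.Icc (-|N|) |N|,
            ((Fintype.piFinset fun _ : Fin d => s k).filter
              fun x => eval x (G - C t) = 0).card) * (2 * k + 1) :=
          Nat.mul_le_mul_right _ Finset.card_biUnion_le
      _ = ∑ t ∈ Finset.Icc (-|N|) |N|,
            ((Fintype.piFinset fun _ : Fin d => s k).filter
              fun x => eval x (G - C t) = 0).card * (2 * k + 1) := by rw [Finset.sum_mul]
      _ ≤ ∑ t ∈ Finset.Icc (-|N|) |N|, (G - C t).totalDegree * (2 * k + 1) ^ d := by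
          apply Finset.sum_le_sum
          intro t _
          have := count_zeros d (G - C t) (hnz t) (s k)
          rwa [hscard k] at this
      _ = C0 * (2 * k + 1) ^ d := by rw [hC0, Finset.sum_mul]
  -- pass to reals and squeeze
  have hpos : ∀ k : ℕ, (0:ℝ) < 2 * (k:ℝ) + 1 := by intro k; positivity
  apply squeeze_zero (g := fun k : ℕ => (C0 : ℝ) / (2 * (k:ℝ) + 1))
  · intro k
    positivity
  · intro k
    rw [div_le_div_iff₀ (by positivity) (hpos k)]
    have := hnat k
    have hcast : (Nat.card {x : Fin d → ℤ //
        (∀ t, x t ∈ Set.Icc (-(k : ℤ)) (k : ℤ)) ∧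
        Finset.gcd Finset.univ (fun j => eval x (F j)) = 1} : ℝ) * (2 * (k:ℝ) + 1)
        ≤ (C0 : ℝ) * (2 * (k:ℝ) + 1) ^ d := by
      exact_mod_cast this
    exact hcast
  · apply Tendsto.div_atTop tendsto_const_nhds
    apply tendsto_atTop_add_const_right
    exact Tendsto.const_mul_atTop two_pos tendsto_natCast_atTop_atTop
end

section
/- Let d be a positive integer, h ≥ 2, and let G_1,…,G_h ∈ ℚ[x_1,…,x_d] be nonzero polynomials that are relatively prime in ℚ[x_1,…,x_d]. Then there exist integers v_3,…,v_h such that every common divisor of G_1 and G_2 + Σ_{i=3}^{h} v_i·G_i in ℚ[x_1,…,x_d] is a unit. -/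
open UniqueFactorizationMonoid

/-- Key auxiliary lemma: if a prime `q` divides `G 1 + ∑_{i≥2} t^i • G i` for
infinitely many integers `t`, then `q` divides `G j` for every `j ≠ 0`. -/
lemma aux_inf_bad {d h : ℕ} (hh : 2 ≤ h)
    (G : Fin h → MvPolynomial (Fin d) ℚ)
    (q : MvPolynomial (Fin d) ℚ) (hq : Prime q)
    (hinf : {t : ℤ | q ∣ (G ⟨1, by omega⟩ +
      ∑ i ∈ Finset.univ.filter (fun i : Fin h => 2 ≤ (i : ℕ)),
        ((t : ℚ) ^ (i : ℕ)) • G i)}.Infinite) :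
    ∀ j : Fin h, (j : ℕ) ≠ 0 → q ∣ G j := by
  classical
  let I : Ideal (MvPolynomial (Fin d) ℚ) := Ideal.span {q}
  haveI hIp : I.IsPrime := (Ideal.span_singleton_prime hq.ne_zero).mpr hq
  haveI : Nontrivial (MvPolynomial (Fin d) ℚ ⧸ I) :=
    Ideal.Quotient.nontrivial_iff.mpr (fun hc => hq.not_unit
      ((Ideal.span_singleton_eq_top).mp hc))
  let φ : MvPolynomial (Fin d) ℚ →+* MvPolynomial (Fin d) ℚ ⧸ I := Ideal.Quotient.mk I
  set Fs : Finset (Fin h) := Finset.univ.filter (fun i : Fin h => 2 ≤ (i : ℕ)) with hFs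
  set P : Polynomial (MvPolynomial (Fin d) ℚ ⧸ I) :=
    Polynomial.C (φ (G ⟨1, by omega⟩)) +
      ∑ i ∈ Fs, Polynomial.C (φ (G i)) * Polynomial.X ^ (i : ℕ) with hP
  have hdvd_iff : ∀ x : MvPolynomial (Fin d) ℚ, q ∣ x ↔ φ x = 0 := by
    intro x
    rw [show φ x = 0 ↔ x ∈ I from Ideal.Quotient.eq_zero_iff_mem,
      Ideal.mem_span_singleton]
  have hroot : ∀ t ∈ {t : ℤ | q ∣ (G ⟨1, by omega⟩ +
      ∑ i ∈ Fs, ((t : ℚ) ^ (i : ℕ)) • G i)}, P.eval ((t : ℤ) : MvPolynomial (Fin d) ℚ ⧸ I) = 0 := by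
    intro t ht
    have h0 : φ (G ⟨1, by omega⟩ + ∑ i ∈ Fs, ((t : ℚ) ^ (i : ℕ)) • G i) = 0 :=
      (hdvd_iff _).mp ht
    rw [map_add, map_sum] at h0
    have hterm : ∀ i : Fin h, φ (((t : ℚ) ^ (i : ℕ)) • G i)
        = φ (G i) * ((t : ℤ) : MvPolynomial (Fin d) ℚ ⧸ I) ^ (i : ℕ) := by
      intro i
      rw [MvPolynomial.smul_eq_C_mul, map_mul, mul_comm]
      congr 1
      rw [map_pow, map_intCast, map_pow, map_intCast]
    simp only [hterm] at h0
    rw [hP]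
    simp only [Polynomial.eval_add, Polynomial.eval_finset_sum, Polynomial.eval_mul,
      Polynomial.eval_C, Polynomial.eval_pow, Polynomial.eval_X]
    exact h0
  -- The polynomial P has infinitely many roots, hence is 0.
  have hcast_inj : Function.Injective
      (fun t : ℤ => ((t : ℤ) : MvPolynomial (Fin d) ℚ ⧸ I)) := by
    intro a b hab
    have hQ : Function.Injective (algebraMap ℚ (MvPolynomial (Fin d) ℚ ⧸ I)) :=
      (algebraMap ℚ (MvPolynomial (Fin d) ℚ ⧸ I)).injective
    have h2 : (algebraMap ℚ (MvPolynomial (Fin d) ℚ ⧸ I)) ((a : ℤ) : ℚ)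
        = (algebraMap ℚ (MvPolynomial (Fin d) ℚ ⧸ I)) ((b : ℤ) : ℚ) := by
      rw [map_intCast, map_intCast]; exact hab
    have := hQ h2
    exact_mod_cast this
  have hP0 : P = 0 := by
    by_contra hPne
    have hfin := P.finite_setOf_isRoot hPne
    have himg : ((fun t : ℤ => ((t : ℤ) : MvPolynomial (Fin d) ℚ ⧸ I)) ''
        {t : ℤ | q ∣ (G ⟨1, by omega⟩ + ∑ i ∈ Fs, ((t : ℚ) ^ (i : ℕ)) • G i)})
        ⊆ {x | P.IsRoot x} := by
      rintro x ⟨t, ht, rfl⟩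
      exact hroot t ht
    exact (hinf.image (hcast_inj.injOn)).mono himg hfin
  -- Extract divisibilities from the vanishing of coefficients.
  have hc1 : q ∣ G ⟨1, by omega⟩ := by
    rw [hdvd_iff]
    have hco := congrArg (fun p => Polynomial.coeff p 0) hP0
    simp only [hP, Polynomial.coeff_add, Polynomial.finset_sum_coeff,
      Polynomial.coeff_C_mul, Polynomial.coeff_X_pow, Polynomial.coeff_C,
      Polynomial.coeff_zero, if_pos rfl] at hco
    have hz : ∑ i ∈ Fs, φ (G i) * (if (0:ℕ) = (i:ℕ) then (1:MvPolynomial (Fin d) ℚ ⧸ I) else 0)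
        = 0 := by
      refine Finset.sum_eq_zero fun i hi => ?_
      rw [hFs, Finset.mem_filter] at hi
      rw [if_neg (by omega), mul_zero]
    rw [hz, add_zero] at hco
    exact hco
  intro j hj
  rcases Nat.lt_or_ge (j : ℕ) 2 with hj2 | hj2
  · have hval : (j : ℕ) = 1 := by omega
    have hjeq : j = ⟨1, by omega⟩ := Fin.ext hval
    rwa [hjeq]
  · rw [hdvd_iff]
    have hco := congrArg (fun p => Polynomial.coeff p (j : ℕ)) hP0
    simp only [hP, Polynomial.coeff_add, Polynomial.finset_sum_coeff,
      Polynomial.coeff_C_mul, Polynomial.coeff_X_pow, Polynomial.coeff_C,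
      Polynomial.coeff_zero] at hco
    rw [if_neg (by omega : ¬ ((j:ℕ) = 0))] at hco
    have hsum : ∑ i ∈ Fs, φ (G i) * (if (j:ℕ) = (i:ℕ) then (1:MvPolynomial (Fin d) ℚ ⧸ I) else 0)
        = φ (G j) := by
      rw [Finset.sum_eq_single j]
      · simp
      · intro b hb hbj
        rw [if_neg (fun hc => hbj (Fin.ext hc.symm)), mul_zero]
      · intro hjmem
        exact absurd (by rw [hFs]; exact Finset.mem_filter.mpr ⟨Finset.mem_univ _, hj2⟩) hjmem
    rw [zero_add, hsum] at hco
    exact hco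

/-- If `G_1, …, G_h ∈ ℚ[x_1,…,x_d]` (`h ≥ 2`) are nonzero and relatively
prime, then there exist integers `v_3, …, v_h` such that every common divisor
of `G_1` and `G_2 + ∑_{i=3}^{h} v_i·G_i` is a unit. -/
theorem stmt4 (d h : ℕ) (hd : 0 < d) (hh : 2 ≤ h)
    (G : Fin h → MvPolynomial (Fin d) ℚ) (hG : ∀ j, G j ≠ 0)
    (hcop : ¬ ∃ q : MvPolynomial (Fin d) ℚ, Prime q ∧ ∀ j, q ∣ G j) :
    ∃ v : Fin h → ℤ, ∀ e : MvPolynomial (Fin d) ℚ,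
      e ∣ G ⟨0, by omega⟩ →
      e ∣ (G ⟨1, by omega⟩ +
        ∑ i ∈ Finset.univ.filter (fun i : Fin h => 2 ≤ (i : ℕ)),
          (v i : ℚ) • G i) →
      IsUnit e := by
  classical
  have hbadfin : ∀ q ∈ (factors (G ⟨0, by omega⟩)).toFinset,
      ({t : ℤ | q ∣ (G ⟨1, by omega⟩ +
        ∑ i ∈ Finset.univ.filter (fun i : Fin h => 2 ≤ (i : ℕ)),
          ((t : ℚ) ^ (i : ℕ)) • G i)}).Finite := by
    intro q hqmem
    rw [Multiset.mem_toFinset] at hqmem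
    have hq : Prime q := prime_of_factor q hqmem
    have hq0 : q ∣ G ⟨0, by omega⟩ := dvd_of_mem_factors hqmem
    by_contra hinf
    have hall := aux_inf_bad hh G q hq hinf
    exact hcop ⟨q, hq, fun j => by
      rcases Nat.eq_zero_or_pos (j : ℕ) with hj | hj
      · have hjeq : j = ⟨0, by omega⟩ := Fin.ext hj
        rw [hjeq]; exact hq0
      · exact hall j (by omega)⟩
  have hBigFin : (⋃ q ∈ (factors (G ⟨0, by omega⟩)).toFinset,
      {t : ℤ | q ∣ (G ⟨1, by omega⟩ +
        ∑ i ∈ Finset.univ.filter (fun i : Fin h => 2 ≤ (i : ℕ)),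
          ((t : ℚ) ^ (i : ℕ)) • G i)}).Finite :=
    Set.Finite.biUnion (Set.finite_mem_finset _) hbadfin
  obtain ⟨t, ht⟩ := (hBigFin.infinite_compl).nonempty
  refine ⟨fun i => t ^ (i : ℕ), ?_⟩
  intro e he1 he2
  by_contra heu
  have hene : e ≠ 0 := fun hc => hG ⟨0, by omega⟩ (zero_dvd_iff.mp (hc ▸ he1))
  obtain ⟨p, hpirr, hpe⟩ := WfDvdMonoid.exists_irreducible_factor heu hene
  have hpg1 : p ∣ G ⟨0, by omega⟩ := hpe.trans he1
  obtain ⟨q, hqmem, hassoc⟩ := exists_mem_factors_of_dvd (hG ⟨0, by omega⟩) hpirr hpg1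
  have he2' : e ∣ (G ⟨1, by omega⟩ +
      ∑ i ∈ Finset.univ.filter (fun i : Fin h => 2 ≤ (i : ℕ)),
        ((t : ℚ) ^ (i : ℕ)) • G i) := by
    have hsum_eq : (G ⟨1, by omega⟩ +
        ∑ i ∈ Finset.univ.filter (fun i : Fin h => 2 ≤ (i : ℕ)),
          (((t ^ (i : ℕ) : ℤ) : ℚ)) • G i)
        = (G ⟨1, by omega⟩ +
        ∑ i ∈ Finset.univ.filter (fun i : Fin h => 2 ≤ (i : ℕ)),
          ((t : ℚ) ^ (i : ℕ)) • G i) := by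
      congr 1
      refine Finset.sum_congr rfl fun i _ => ?_
      push_cast
      rfl
    rw [← hsum_eq]
    exact he2
  have hqB : q ∣ (G ⟨1, by omega⟩ +
      ∑ i ∈ Finset.univ.filter (fun i : Fin h => 2 ≤ (i : ℕ)),
        ((t : ℚ) ^ (i : ℕ)) • G i) :=
    hassoc.symm.dvd.trans (hpe.trans he2')
  exact ht (Set.mem_biUnion (Multiset.mem_toFinset.mpr hqmem) hqB)
end

section
/- Let d be a positive integer, G ∈ ℤ[x_1,…,x_d] a nonzero polynomial, and p a prime. Define σ_p := p^{−d} · #{x ∈ (ℤ/pℤ)^d : G(x) = 0 in ℤ/pℤ} and, for a positive integer k, σ_p^{(k)} := (2k+1)^{−d} · #{x ∈ Box(k)^d : p divides G(x)}. Then σ_p^{(k)} → σ_p as k → ∞, and σ_p^{(k)} ≤ 2^d · σ_p for every k with 2k+1 > p. -/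
open Filter MvPolynomial

lemma red_eval (p : ℕ) (d : ℕ) (G : MvPolynomial (Fin d) ℤ) (x : Fin d → ℤ) :
    aeval (fun t => ((x t : ZMod p))) G = ((eval x G : ℤ) : ZMod p) := by
  have h := eval₂_comp_left (Int.castRingHom (ZMod p)) (RingHom.id ℤ) x G
  rw [RingHom.comp_id] at h
  calc aeval (fun t => ((x t : ZMod p))) G
      = eval₂ (Int.castRingHom (ZMod p)) (⇑(Int.castRingHom (ZMod p)) ∘ x) G := by
        rw [aeval_def, algebraMap_int_eq]; rfl
    _ = (Int.castRingHom (ZMod p)) (eval₂ (RingHom.id ℤ) x G) := h.symm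
    _ = ((eval x G : ℤ) : ZMod p) := rfl

lemma count_one (p : ℕ) (hp : 0 < p) (m : ℤ) (a : ZMod p) :
    ((Finset.Ico m (m + p)).filter (fun x : ℤ => (x : ZMod p) = a)).card = 1 := by
  haveI : NeZero p := ⟨hp.ne'⟩
  rw [Finset.card_eq_one]
  set v : ℤ := ((a - (m : ZMod p)).val : ℤ) with hv
  have hv0 : 0 ≤ v := Int.natCast_nonneg _
  have hvp : v < p := by rw [hv]; exact_mod_cast ZMod.val_lt _
  have hcast : ((m + v : ℤ) : ZMod p) = a := by
    push_cast [hv]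
    simp [ZMod.natCast_val, ZMod.cast_id]
  refine ⟨m + v, ?_⟩
  ext x
  simp only [Finset.mem_filter, Finset.mem_Ico, Finset.mem_singleton]
  constructor
  · rintro ⟨⟨h1, h2⟩, h3⟩
    have hd : (p:ℤ) ∣ x - (m + v) := by
      rw [← ZMod.intCast_zmod_eq_zero_iff_dvd, Int.cast_sub, h3, hcast, sub_self]
    have := Int.eq_zero_of_abs_lt_dvd hd (by rw [abs_lt]; omega)
    omega
  · rintro rfl
    exact ⟨⟨by omega, by omega⟩, hcast⟩

lemma count_mul (p : ℕ) (hp : 0 < p) (a : ZMod p) (q : ℕ) : ∀ m : ℤ,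
    ((Finset.Ico m (m + p * q)).filter (fun x : ℤ => (x : ZMod p) = a)).card = q := by
  induction q with
  | zero => simp
  | succ n ih =>
    intro m
    have hsplit : Finset.Ico m (m + p * (n + 1 : ℕ)) =
        Finset.Ico m (m + p) ∪ Finset.Ico (m + p) (m + p * (n + 1 : ℕ)) := by
      rw [Finset.Ico_union_Ico_eq_Ico] <;> push_cast <;> nlinarith [hp]
    have hdisj : Disjoint (Finset.Ico m (m + p)) (Finset.Ico (m + p) (m + p * (n + 1 : ℕ))) :=
      Finset.Ico_disjoint_Ico_consecutive _ _ _
    rw [hsplit, Finset.filter_union, Finset.card_union_of_disjoint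
      (Finset.disjoint_filter_filter hdisj), count_one p hp m a]
    have h2 : m + (p : ℤ) * (n + 1 : ℕ) = (m + p) + p * n := by push_cast; ring
    rw [h2, ih (m + p)]
    omega

lemma count_bounds (p : ℕ) (hp : 0 < p) (a : ZMod p) (m : ℤ) (n : ℕ) :
    n / p ≤ ((Finset.Ico m (m + n)).filter (fun x : ℤ => (x : ZMod p) = a)).card ∧
    ((Finset.Ico m (m + n)).filter (fun x : ℤ => (x : ZMod p) = a)).card ≤ n / p + 1 := by
  set q := n / p with hq
  have hle : p * q ≤ n := Nat.mul_div_le n p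
  have hlt : n < p * (q + 1) := Nat.lt_mul_div_succ n hp
  have hsplit : Finset.Ico m (m + n) =
      Finset.Ico m (m + p * q) ∪ Finset.Ico (m + p * q) (m + n) := by
    rw [Finset.Ico_union_Ico_eq_Ico] <;> push_cast <;> [nlinarith; linarith [(by exact_mod_cast hle : ((p*q:ℕ):ℤ) ≤ n)]]
  have hdisj : Disjoint (Finset.Ico m (m + p * q)) (Finset.Ico (m + p * q) (m + n)) :=
    Finset.Ico_disjoint_Ico_consecutive _ _ _
  have hrest : ((Finset.Ico (m + p * q) (m + n)).filter
      (fun x : ℤ => (x : ZMod p) = a)).card ≤ 1 := by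
    rw [← count_one p hp (m + p * q) a]
    apply Finset.card_le_card
    apply Finset.filter_subset_filter
    apply Finset.Ico_subset_Ico le_rfl
    push_cast
    nlinarith [hlt]
  rw [hsplit, Finset.filter_union, Finset.card_union_of_disjoint
      (Finset.disjoint_filter_filter hdisj), count_mul p hp a q m]
  omega

lemma box_card (d p : ℕ) [NeZero p] (G : MvPolynomial (Fin d) ℤ) (k : ℕ) :
    Nat.card {x : Fin d → ℤ //
        (∀ t, x t ∈ Set.Icc (-(k : ℤ)) (k : ℤ)) ∧ (p : ℤ) ∣ eval x G}
      = ∑ r ∈ Finset.univ.filter (fun r : Fin d → ZMod p => aeval r G = 0),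
          ∏ t, ((Finset.Icc (-(k:ℤ)) (k:ℤ)).filter (fun x : ℤ => (x : ZMod p) = r t)).card := by
  classical
  have hp : 0 < p := Nat.pos_of_ne_zero (NeZero.ne p)
  set B : Finset (Fin d → ℤ) :=
    (Fintype.piFinset fun _ : Fin d => Finset.Icc (-(k:ℤ)) (k:ℤ)).filter
      (fun x => (p : ℤ) ∣ eval x G) with hB
  have hset : {x : Fin d → ℤ |
      (∀ t, x t ∈ Set.Icc (-(k : ℤ)) (k : ℤ)) ∧ (p : ℤ) ∣ eval x G} = ↑B := by
    ext x
    simp [hB, Fintype.mem_piFinset]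
  have h1 : Nat.card {x : Fin d → ℤ //
      (∀ t, x t ∈ Set.Icc (-(k : ℤ)) (k : ℤ)) ∧ (p : ℤ) ∣ eval x G} = B.card := by
    rw [← Set.ncard_coe_finset, ← hset, ← Nat.card_coe_set_eq]
    rfl
  rw [h1]
  have hred : ∀ x : Fin d → ℤ, ((p : ℤ) ∣ eval x G ↔
      aeval (fun t => ((x t : ZMod p))) G = 0) := by
    intro x
    rw [red_eval, ZMod.intCast_zmod_eq_zero_iff_dvd]
  rw [Finset.card_eq_sum_card_fiberwise
    (f := fun x : Fin d → ℤ => fun t => ((x t : ZMod p)))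
    (t := Finset.univ.filter (fun r : Fin d → ZMod p => aeval r G = 0))
    (fun x hx => by
      simp only [Finset.coe_filter, Set.mem_setOf_eq, Finset.mem_filter, Finset.mem_univ, true_and]
      rw [← hred x]
      exact (Finset.mem_filter.mp hx).2)]
  refine Finset.sum_congr rfl fun r hr => ?_
  have hr0 : aeval r G = 0 := (Finset.mem_filter.mp hr).2
  have : B.filter (fun x => (fun t => ((x t : ZMod p))) = r) =
      Fintype.piFinset (fun t => (Finset.Icc (-(k:ℤ)) (k:ℤ)).filter
        (fun x : ℤ => (x : ZMod p) = r t)) := by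
    ext x
    simp only [hB, Finset.mem_filter, Fintype.mem_piFinset, _root_.funext_iff]
    constructor
    · rintro ⟨⟨hbox, -⟩, hres⟩ t
      exact ⟨hbox t, hres t⟩
    · intro h
      refine ⟨⟨fun t => (h t).1, ?_⟩, fun t => (h t).2⟩
      rw [hred x]
      have : (fun t => ((x t : ZMod p))) = r := funext fun t => (h t).2
      rw [this, hr0]
  rw [this, Fintype.card_piFinset]

/-- For a nonzero `G ∈ ℤ[x_1,…,x_d]` and a prime `p`, the box proportion
`σ_p^{(k)}` of `x ∈ Box(k)^d` with `p ∣ G(x)` converges, as `k → ∞`, to the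
proportion `σ_p` of zeros of `G` in `(ℤ/pℤ)^d`, and `σ_p^{(k)} ≤ 2^d·σ_p`
whenever `2k + 1 > p`. -/
theorem stmt6 (d : ℕ) (hd : 0 < d) (G : MvPolynomial (Fin d) ℤ) (hG : G ≠ 0)
    (p : ℕ) (hp : p.Prime) :
    Tendsto (fun k : ℕ =>
        (Nat.card {x : Fin d → ℤ //
            (∀ t, x t ∈ Set.Icc (-(k : ℤ)) (k : ℤ)) ∧ (p : ℤ) ∣ eval x G} : ℝ)
          / (2 * (k : ℝ) + 1) ^ d) atTop
      (nhds ((Nat.card {x : Fin d → ZMod p // aeval x G = 0} : ℝ) / (p : ℝ) ^ d)) ∧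
    ∀ k : ℕ, p < 2 * k + 1 →
      (Nat.card {x : Fin d → ℤ //
          (∀ t, x t ∈ Set.Icc (-(k : ℤ)) (k : ℤ)) ∧ (p : ℤ) ∣ eval x G} : ℝ)
        / (2 * (k : ℝ) + 1) ^ d ≤
      2 ^ d * ((Nat.card {x : Fin d → ZMod p // aeval x G = 0} : ℝ) / (p : ℝ) ^ d) := by
  classical
  haveI : NeZero p := ⟨hp.pos.ne'⟩
  have hp0 : 0 < p := hp.pos
  have hpR : (0:ℝ) < p := by exact_mod_cast hp0
  set Z : Finset (Fin d → ZMod p) :=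
    Finset.univ.filter (fun r : Fin d → ZMod p => aeval r G = 0) with hZ
  set N : ℕ := Z.card with hN
  -- identify Nat.card of zeros with Z.card
  have hNcard : (Nat.card {x : Fin d → ZMod p // aeval x G = 0}) = N := by
    rw [Nat.card_eq_fintype_card, hN, hZ]
    convert Fintype.card_subtype _ using 2
  -- per-coordinate counts
  set c : ℕ → ZMod p → ℕ := fun k a =>
    ((Finset.Icc (-(k:ℤ)) (k:ℤ)).filter (fun x : ℤ => (x : ZMod p) = a)).card with hc
  set q : ℕ → ℕ := fun k => (2*k+1)/p with hq
  have hIcc : ∀ k : ℕ, Finset.Icc (-(k:ℤ)) (k:ℤ) =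
      Finset.Ico (-(k:ℤ)) (-(k:ℤ) + ((2*k+1 : ℕ) : ℤ)) := by
    intro k
    ext x
    simp only [Finset.mem_Icc, Finset.mem_Ico]
    push_cast
    omega
  have hcb : ∀ (k : ℕ) (a : ZMod p), q k ≤ c k a ∧ c k a ≤ q k + 1 := by
    intro k a
    rw [hc, hq]
    simp only [hIcc k]
    exact count_bounds p hp0 a _ _
  -- total count
  set T : ℕ → ℕ := fun k => Nat.card {x : Fin d → ℤ //
      (∀ t, x t ∈ Set.Icc (-(k : ℤ)) (k : ℤ)) ∧ (p : ℤ) ∣ eval x G} with hT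
  have hTeq : ∀ k, T k = ∑ r ∈ Z, ∏ t, c k (r t) := fun k => box_card d p G k
  have hub : ∀ k, T k ≤ N * (q k + 1)^d := by
    intro k
    rw [hTeq k, hN]
    calc ∑ r ∈ Z, ∏ t, c k (r t) ≤ ∑ _r ∈ Z, (q k + 1)^d := by
          refine Finset.sum_le_sum fun r _ => ?_
          calc ∏ t, c k (r t) ≤ ∏ _t : Fin d, (q k + 1) :=
                Finset.prod_le_prod' fun t _ => (hcb k (r t)).2
            _ = (q k + 1)^d := by simp [Finset.prod_const, Finset.card_univ]
      _ = Z.card * (q k + 1)^d := by rw [Finset.sum_const, smul_eq_mul]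
  have hlb : ∀ k, N * (q k)^d ≤ T k := by
    intro k
    rw [hTeq k, hN]
    calc Z.card * (q k)^d = ∑ _r ∈ Z, (q k)^d := by rw [Finset.sum_const, smul_eq_mul]
      _ ≤ ∑ r ∈ Z, ∏ t, c k (r t) := by
          refine Finset.sum_le_sum fun r _ => ?_
          calc (q k)^d = ∏ _t : Fin d, q k := by simp [Finset.prod_const, Finset.card_univ]
            _ ≤ ∏ t, c k (r t) := Finset.prod_le_prod' fun t _ => (hcb k (r t)).1
  -- real bounds on q
  have hLpos : ∀ k : ℕ, (0:ℝ) < 2*(k:ℝ)+1 := fun k => by positivity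
  have hq_ub : ∀ k : ℕ, (q k : ℝ) ≤ (2*(k:ℝ)+1)/p := by
    intro k
    rw [le_div_iff₀ hpR]
    have h := Nat.mul_div_le (2*k+1) p
    have : ((p * ((2*k+1)/p) : ℕ) : ℝ) ≤ ((2*k+1 : ℕ) : ℝ) := by exact_mod_cast h
    push_cast at this
    rw [hq]; push_cast; linarith
  have hq_lb : ∀ k : ℕ, (2*(k:ℝ)+1)/p - 1 ≤ (q k : ℝ) := by
    intro k
    have h := Nat.lt_mul_div_succ (2*k+1) hp0
    have : ((2*k+1 : ℕ) : ℝ) < (p : ℝ) * ((q k : ℝ) + 1) := by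
      rw [hq]; exact_mod_cast h
    push_cast at this
    rw [sub_le_iff_le_add, div_le_iff₀ hpR]
    nlinarith [this]
  -- real upper bound
  have hubR : ∀ k : ℕ, (T k : ℝ) / (2*(k:ℝ)+1)^d ≤
      (N:ℝ) * (1/(p:ℝ) + 1/(2*(k:ℝ)+1))^d := by
    intro k
    set L : ℝ := 2*(k:ℝ)+1 with hL
    have hL0 : (0:ℝ) < L := hLpos k
    rw [div_le_iff₀ (pow_pos hL0 d)]
    have key : ((q k : ℝ) + 1) ≤ (1/(p:ℝ) + 1/L) * L := by
      have : (1/(p:ℝ) + 1/L) * L = L/p + 1 := by field_simp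
      rw [this]
      linarith [hq_ub k]
    calc (T k : ℝ) ≤ (N:ℝ) * ((q k : ℝ) + 1)^d := by
          exact_mod_cast Nat.cast_le.mpr (hub k)
      _ ≤ (N:ℝ) * ((1/(p:ℝ) + 1/L) * L)^d := by
          apply mul_le_mul_of_nonneg_left _ (Nat.cast_nonneg N)
          exact pow_le_pow_left₀ (by positivity) key d
      _ = (N:ℝ) * (1/(p:ℝ) + 1/L)^d * L^d := by rw [mul_pow]; ring
  -- real lower bound for large k
  have hlbR : ∀ k : ℕ, p ≤ k →
      (N:ℝ) * (1/(p:ℝ) - 1/(2*(k:ℝ)+1))^d ≤ (T k : ℝ) / (2*(k:ℝ)+1)^d := by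
    intro k hk
    set L : ℝ := 2*(k:ℝ)+1 with hL
    have hL0 : (0:ℝ) < L := hLpos k
    have hpL : (p:ℝ) ≤ L := by
      have : (p:ℝ) ≤ (k:ℝ) := by exact_mod_cast hk
      rw [hL]; linarith
    have hbase : (0:ℝ) ≤ 1/(p:ℝ) - 1/L := by
      rw [sub_nonneg]
      exact one_div_le_one_div_of_le hpR hpL
    rw [le_div_iff₀ (pow_pos hL0 d)]
    have key : (1/(p:ℝ) - 1/L) * L ≤ (q k : ℝ) := by
      have : (1/(p:ℝ) - 1/L) * L = L/p - 1 := by field_simp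
      rw [this]
      linarith [hq_lb k]
    calc (N:ℝ) * (1/(p:ℝ) - 1/L)^d * L^d = (N:ℝ) * ((1/(p:ℝ) - 1/L) * L)^d := by
          rw [mul_pow]; ring
      _ ≤ (N:ℝ) * ((q k : ℝ))^d := by
          apply mul_le_mul_of_nonneg_left _ (Nat.cast_nonneg N)
          exact pow_le_pow_left₀ (by positivity) key d
      _ ≤ (T k : ℝ) := by exact_mod_cast Nat.cast_le.mpr (hlb k)
  -- tendsto facts
  have hLtop : Tendsto (fun k : ℕ => 2*(k:ℝ)+1) atTop atTop := by
    apply tendsto_atTop_add_const_right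
    exact tendsto_natCast_atTop_atTop.const_mul_atTop two_pos
  have h0 : Tendsto (fun k : ℕ => 1/(2*(k:ℝ)+1)) atTop (nhds 0) := by
    simpa [one_div, Pi.inv_def] using hLtop.inv_tendsto_atTop
  have hupperT : Tendsto (fun k : ℕ => (N:ℝ) * (1/(p:ℝ) + 1/(2*(k:ℝ)+1))^d) atTop
      (nhds ((N:ℝ) / (p:ℝ)^d)) := by
    have := (((tendsto_const_nhds (x := 1/(p:ℝ))).add h0).pow d).const_mul (N:ℝ)
    simpa [add_zero, div_pow, one_div, mul_one_div, div_eq_mul_inv] using this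
  have hlowerT : Tendsto (fun k : ℕ => (N:ℝ) * (1/(p:ℝ) - 1/(2*(k:ℝ)+1))^d) atTop
      (nhds ((N:ℝ) / (p:ℝ)^d)) := by
    have := (((tendsto_const_nhds (x := 1/(p:ℝ))).sub h0).pow d).const_mul (N:ℝ)
    simpa [sub_zero, div_pow, one_div, mul_one_div, div_eq_mul_inv] using this
  constructor
  · rw [show ((Nat.card {x : Fin d → ZMod p // aeval x G = 0} : ℝ)) = (N:ℝ) from
      Nat.cast_inj.mpr hNcard]
    exact tendsto_of_tendsto_of_tendsto_of_le_of_le' hlowerT hupperT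
      (eventually_atTop.mpr ⟨p, fun k hk => hlbR k hk⟩)
      (Eventually.of_forall fun k => hubR k)
  · intro k hk
    have hNR : ((Nat.card {x : Fin d → ZMod p // aeval x G = 0} : ℝ)) = (N:ℝ) := by
      exact Nat.cast_inj.mpr hNcard
    rw [hNR]
    refine le_trans (hubR k) ?_
    have hpL : (p:ℝ) < 2*(k:ℝ)+1 := by exact_mod_cast hk
    have h1 : 1/(2*(k:ℝ)+1) ≤ 1/(p:ℝ) := one_div_le_one_div_of_le hpR hpL.le
    have h2 : (1/(p:ℝ) + 1/(2*(k:ℝ)+1))^d ≤ (2/(p:ℝ))^d := by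
      apply pow_le_pow_left₀ (by positivity)
      rw [show (2:ℝ)/(p:ℝ) = 1/(p:ℝ) + 1/(p:ℝ) by ring]
      linarith
    calc (N:ℝ) * (1/(p:ℝ) + 1/(2*(k:ℝ)+1))^d ≤ (N:ℝ) * (2/(p:ℝ))^d :=
          mul_le_mul_of_nonneg_left h2 (Nat.cast_nonneg N)
      _ = 2^d * ((N:ℝ) / (p:ℝ)^d) := by rw [div_pow]; ring
end

section
/- Let n be a positive integer and c an integer. Then lim_{k→∞} (2k+1)^{−n²} · #{M : M is an n×n matrix with all entries in Box(k) and det(M) = c} = 0; in words, the density of the determinant of a random n×n integer matrix at any fixed value is 0. -/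
open Filter Finset

private noncomputable def ibox (k : ℕ) : Finset ℤ := Finset.Icc (-(k:ℤ)) k

private noncomputable def iboxM (n k : ℕ) : Finset (Matrix (Fin n) (Fin n) ℤ) :=
  Fintype.piFinset fun _ => Fintype.piFinset fun _ => ibox k

private noncomputable def SS (n k : ℕ) (c : ℤ) : Finset (Matrix (Fin n) (Fin n) ℤ) :=
  (iboxM n k).filter fun M => M.det = c

private lemma card_ibox (k : ℕ) : (ibox k).card = 2 * k + 1 := by
  simp [ibox, Int.card_Icc]; omega

private lemma mem_iboxM {n k : ℕ} {M : Matrix (Fin n) (Fin n) ℤ} :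
    M ∈ iboxM n k ↔ ∀ i j, M i j ∈ ibox k := by
  exact ⟨fun h i j => Fintype.mem_piFinset.mp (Fintype.mem_piFinset.mp h i) j,
    fun h => Fintype.mem_piFinset.mpr fun i => Fintype.mem_piFinset.mpr fun j => h i j⟩

/-- determinant difference for matrices agreeing off `(0,0)` -/
private lemma det_diff {m : ℕ} (M N : Matrix (Fin (m+1)) (Fin (m+1)) ℤ)
    (h : ∀ i j : Fin (m+1), ¬(i = 0 ∧ j = 0) → M i j = N i j) :
    M.det - N.det = (M 0 0 - N 0 0) * (M.submatrix Fin.succ Fin.succ).det := by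
  have hsub : ∀ i : Fin m,
      M.submatrix (Fin.succ i).succAbove Fin.succ = N.submatrix (Fin.succ i).succAbove Fin.succ := by
    intro i
    ext r s
    exact h _ _ (by simp [Fin.succ_ne_zero])
  have hsub0 : M.submatrix (0 : Fin (m+1)).succAbove Fin.succ
      = N.submatrix (0 : Fin (m+1)).succAbove Fin.succ := by
    ext r s
    exact h _ _ (by simp [Fin.succ_ne_zero])
  have hsub0' : M.submatrix (0 : Fin (m+1)).succAbove Fin.succ
      = M.submatrix Fin.succ Fin.succ := by
    rw [Fin.succAbove_zero]
  rw [Matrix.det_succ_column_zero M, Matrix.det_succ_column_zero N,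
    Fin.sum_univ_succ, Fin.sum_univ_succ]
  have hcol : ∀ i : Fin m, M (Fin.succ i) 0 = N (Fin.succ i) 0 := by
    intro i; exact h _ _ (by simp [Fin.succ_ne_zero])
  have : ∑ i : Fin m, (-1 : ℤ) ^ ((Fin.succ i : Fin (m+1)) : ℕ) * M (Fin.succ i) 0 *
        (M.submatrix (Fin.succ i).succAbove Fin.succ).det
      = ∑ i : Fin m, (-1 : ℤ) ^ ((Fin.succ i : Fin (m+1)) : ℕ) * N (Fin.succ i) 0 *
        (N.submatrix (Fin.succ i).succAbove Fin.succ).det := by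
    refine Finset.sum_congr rfl fun i _ => ?_
    rw [hcol i, hsub i]
  have hN0 : N.submatrix (0 : Fin (m+1)).succAbove Fin.succ = M.submatrix Fin.succ Fin.succ :=
    hsub0.symm.trans hsub0'
  rw [this, hsub0', hN0]
  simp only [Fin.val_zero, pow_zero, one_mul, add_sub_add_right_eq_sub]
  ring

/-- The key counting bound. -/
private lemma card_SS_le (m k : ℕ) (c : ℤ) :
    (SS (m+1) k c).card ≤ (2*k+1)^((m+1)^2 - 1) + (2*k+1)^(2*m+1) * (SS m k 0).card := by
  classical
  set P : Matrix (Fin (m+1)) (Fin (m+1)) ℤ → Prop :=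
    fun M => (M.submatrix Fin.succ Fin.succ).det ≠ 0 with hP
  have hsplit := Finset.card_filter_add_card_filter_not (s := SS (m+1) k c) (p := P)
  -- bound for the filter-P part
  have h1 : ((SS (m+1) k c).filter P).card ≤ (2*k+1)^((m+1)^2 - 1) := by
    set T : Finset (Matrix (Fin (m+1)) (Fin (m+1)) ℤ) :=
      Fintype.piFinset fun i => Fintype.piFinset fun j =>
        if i = 0 ∧ j = 0 then ({0} : Finset ℤ) else ibox k with hT
    have hcardT : T.card = (2*k+1)^((m+1)^2 - 1) := by
      have : (m+1)^2 - 1 = m + (m+1) * m := by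
        have : (m+1)^2 = (m + (m+1)*m) + 1 := by ring
        omega
      rw [this, hT]
      erw [Fintype.card_piFinset]
      rw [Fin.prod_univ_succ]
      simp only [Fintype.card_piFinset]
      rw [Fin.prod_univ_succ]
      simp only [Fin.succ_ne_zero, false_and, if_false, if_true, Fin.prod_univ_succ,
        card_ibox, Finset.prod_const, Finset.card_univ, Fintype.card_fin,
        Finset.card_singleton, and_self, if_pos, true_and]
      rw [← pow_mul, one_mul, ← pow_add]
    rw [← hcardT]
    apply Finset.card_le_card_of_injOn
      (fun M => Matrix.of fun i j => if i = 0 ∧ j = 0 then (0:ℤ) else M i j)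
    · intro M hM
      simp only [Finset.mem_coe, Finset.mem_filter, SS, mem_iboxM] at hM
      rw [Finset.mem_coe, hT]
      erw [Fintype.mem_piFinset]
      intro i
      rw [Fintype.mem_piFinset]
      intro j
      by_cases hij : i = 0 ∧ j = 0
      · simp [hij]
      · simpa [hij] using hM.1.1 i j
    · intro M hM N hN hMN
      simp only [Finset.coe_filter, Set.mem_setOf_eq, SS, Finset.mem_filter] at hM hN
      have hoff : ∀ i j : Fin (m+1), ¬(i = 0 ∧ j = 0) → M i j = N i j := by
        intro i j hij
        have := congrFun (congrFun hMN i) j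
        simpa [Matrix.of_apply, hij] using this
      have hd := det_diff M N hoff
      rw [hM.1.2, hN.1.2, sub_self] at hd
      have h00 : M 0 0 = N 0 0 := by
        rcases mul_eq_zero.mp hd.symm with h | h
        · linarith [sub_eq_zero.mp h]
        · exact absurd h hM.2
      ext i j
      by_cases hij : i = 0 ∧ j = 0
      · rw [hij.1, hij.2]; exact h00
      · exact hoff i j hij
  -- bound for the non-P part
  have h2 : ((SS (m+1) k c).filter fun M => ¬ P M).card ≤ (2*k+1)^(2*m+1) * (SS m k 0).card := by
    set T2 : Finset (Matrix (Fin m) (Fin m) ℤ × (Fin (m+1) → ℤ) × (Fin m → ℤ)) :=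
      (SS m k 0) ×ˢ ((Fintype.piFinset fun _ : Fin (m+1) => ibox k) ×ˢ
        (Fintype.piFinset fun _ : Fin m => ibox k)) with hT2
    have hcardT2 : T2.card = (2*k+1)^(2*m+1) * (SS m k 0).card := by
      rw [hT2, Finset.card_product, Finset.card_product, Fintype.card_piFinset,
        Fintype.card_piFinset]
      simp only [card_ibox, Finset.prod_const, Finset.card_univ, Fintype.card_fin]
      rw [show 2*m+1 = (m+1)+m from by omega, pow_add]
      ring
    rw [← hcardT2]
    apply Finset.card_le_card_of_injOn
      (fun M => (M.submatrix Fin.succ Fin.succ, M 0, fun i : Fin m => M (Fin.succ i) 0))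
    · intro M hM
      simp only [Finset.mem_coe, Finset.mem_filter, SS, mem_iboxM, hP] at hM
      push_neg at hM
      obtain ⟨⟨hbox, _⟩, hdet0⟩ := hM
      rw [Finset.mem_coe, hT2, Finset.mem_product, Finset.mem_product]
      refine ⟨?_, ?_, ?_⟩
      · simp only [SS, Finset.mem_filter, mem_iboxM]
        exact ⟨fun i j => hbox _ _, hdet0⟩
      · rw [Fintype.mem_piFinset]; exact fun j => hbox 0 j
      · rw [Fintype.mem_piFinset]; exact fun i => hbox _ 0
    · intro M _ N _ h
      simp only [Prod.mk.injEq] at h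
      obtain ⟨h1', h2', h3'⟩ := h
      ext i j
      refine Fin.cases ?_ (fun i' => ?_) i
      · exact congrFun h2' j
      · refine Fin.cases ?_ (fun j' => ?_) j
        · exact congrFun h3' i'
        · exact congrFun (congrFun h1' i') j'
  omega

private lemma main (n : ℕ) (hn : 0 < n) (c : ℤ) :
    Tendsto (fun k : ℕ => ((SS n k c).card : ℝ) / (2 * (k:ℝ) + 1) ^ (n ^ 2))
      atTop (nhds 0) := by
  induction n generalizing c with
  | zero => omega
  | succ m ih =>
    have hPpos : ∀ k : ℕ, (0:ℝ) < 2 * (k:ℝ) + 1 := by intro k; positivity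
    have hinv : Tendsto (fun k : ℕ => 1 / (2 * (k:ℝ) + 1)) atTop (nhds 0) := by
      simp only [one_div]
      apply Tendsto.inv_tendsto_atTop
      apply tendsto_atTop_add_const_right
      exact (tendsto_natCast_atTop_atTop (R := ℝ)).const_mul_atTop two_pos
    have hm : Tendsto (fun k : ℕ => ((SS m k 0).card : ℝ) / (2 * (k:ℝ) + 1) ^ (m ^ 2))
        atTop (nhds 0) := by
      rcases Nat.eq_zero_or_pos m with h | h
      · subst h
        have : ∀ k : ℕ, (SS 0 k 0).card = 0 := by
          intro k
          simp [SS, Matrix.det_fin_zero, Finset.filter_eq_empty_iff]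
        simpa [this] using tendsto_const_nhds (x := (0:ℝ)) (f := atTop (α := ℕ))
      · exact ih h 0
    apply squeeze_zero (g := fun k : ℕ =>
      1 / (2 * (k:ℝ) + 1) + ((SS m k 0).card : ℝ) / (2 * (k:ℝ) + 1) ^ (m ^ 2))
    · intro k; positivity
    · intro k
      have hb := card_SS_le m k c
      have hbR : ((SS (m+1) k c).card : ℝ) ≤
          (2*(k:ℝ)+1)^((m+1)^2 - 1) + (2*(k:ℝ)+1)^(2*m+1) * ((SS m k 0).card : ℝ) := by
        have := Nat.cast_le (α := ℝ) |>.mpr hb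
        push_cast at this
        convert this using 2 <;> push_cast <;> ring
      set P := 2*(k:ℝ)+1 with hPdef
      have hP0 : (0:ℝ) < P := hPpos k
      rw [div_le_iff₀ (by positivity)]
      calc ((SS (m+1) k c).card : ℝ)
          ≤ P^((m+1)^2 - 1) + P^(2*m+1) * ((SS m k 0).card : ℝ) := hbR
        _ = (1 / P + ((SS m k 0).card : ℝ) / P ^ (m ^ 2)) * P ^ ((m+1) ^ 2) := by
            have he : (m+1)^2 = (m^2 + (2*m+1)) := by ring
            have he2 : (m+1)^2 - 1 = m^2 + 2*m := by omega
            rw [he2, he, pow_add, pow_add]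
            field_simp
            ring
    · simpa using hinv.add hm

private lemma natcard_eq (n k : ℕ) (c : ℤ) :
    (Nat.card {M : Matrix (Fin n) (Fin n) ℤ //
        (∀ i j, M i j ∈ Set.Icc (-(k : ℤ)) (k : ℤ)) ∧ M.det = c}) = (SS n k c).card := by
  have hset : {M : Matrix (Fin n) (Fin n) ℤ |
      (∀ i j, M i j ∈ Set.Icc (-(k : ℤ)) (k : ℤ)) ∧ M.det = c} = ↑(SS n k c) := by
    ext M
    simp only [Set.mem_setOf_eq, Finset.coe_filter, SS, mem_iboxM, ibox, Finset.mem_Icc,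
      Set.mem_Icc]
  calc Nat.card {M : Matrix (Fin n) (Fin n) ℤ //
        (∀ i j, M i j ∈ Set.Icc (-(k : ℤ)) (k : ℤ)) ∧ M.det = c}
      = Set.ncard {M : Matrix (Fin n) (Fin n) ℤ |
        (∀ i j, M i j ∈ Set.Icc (-(k : ℤ)) (k : ℤ)) ∧ M.det = c} := Nat.card_coe_set_eq _
    _ = (SS n k c).card := by rw [hset, Set.ncard_coe_finset]

/-- The density of the determinant of a random `n × n` integer matrix at any
fixed value `c` is 0. -/
theorem stmt10 (n : ℕ) (hn : 0 < n) (c : ℤ) :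
    Tendsto (fun k : ℕ =>
      (Nat.card {M : Matrix (Fin n) (Fin n) ℤ //
          (∀ i j, M i j ∈ Set.Icc (-(k : ℤ)) (k : ℤ)) ∧ M.det = c} : ℝ)
        / (2 * (k : ℝ) + 1) ^ (n ^ 2)) atTop (nhds 0) := by
  refine (main n hn c).congr fun k => ?_
  rw [natcard_eq n k c]
end

section
/- Let m ≤ n be positive integers. Then lim_{k→∞} (2k+1)^{−nm} · #{M : M is an n×m matrix with all entries in Box(k) and M has rank m (equivalently, some m×m minor of M is nonzero)} = 1; in words, a random n×m integer matrix is of full rank with probability 1. -/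
open Filter Finset

noncomputable def SB (k : ℕ) : Finset ℤ := Finset.Icc (-(k:ℤ)) k

lemma SB_card (k : ℕ) : (SB k).card = 2*k+1 := by
  simp [SB, Int.card_Icc]; omega

noncomputable def mbox (a b k : ℕ) : Finset (Matrix (Fin a) (Fin b) ℤ) :=
  Fintype.piFinset fun _ => Fintype.piFinset fun _ => SB k

lemma mem_mbox {a b k : ℕ} {M : Matrix (Fin a) (Fin b) ℤ} :
    M ∈ mbox a b k ↔ ∀ i j, M i j ∈ SB k := by
  exact Fintype.mem_piFinset.trans (forall_congr' fun i => Fintype.mem_piFinset)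

lemma mbox_card (a b k : ℕ) : (mbox a b k).card = (2*k+1)^(a*b) := by
  show (Fintype.piFinset fun _ : Fin a => Fintype.piFinset fun _ : Fin b => SB k).card = _
  rw [Fintype.card_piFinset]
  simp [Fintype.card_piFinset, SB_card, ← pow_mul, mul_comm]

-- T1 bound
lemma T1_bound (n k : ℕ) :
    (((mbox (n+2) (n+2) k).filter (fun A => A.det = 0 ∧
        (A.submatrix Fin.succ Fin.succ).det ≠ 0)).card : ℕ)
      ≤ (2*k+1)^(n^2+4*n+3) := by
  classical
  set TT : Finset (Fin (n+2) → Fin (n+2) → ℤ) :=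
    Fintype.piFinset fun i => Fintype.piFinset fun j =>
      if i = 0 ∧ j = 0 then ({0} : Finset ℤ) else SB k with hTT
  have hcard : TT.card = (2*k+1)^(n^2+4*n+3) := by
    rw [hTT, Fintype.card_piFinset]
    simp only [Fintype.card_piFinset, apply_ite Finset.card, card_singleton, SB_card]
    rw [Fin.prod_univ_succ]
    have h0 : (∏ j : Fin (n+2), if (0:Fin (n+2)) = 0 ∧ j = 0 then (1:ℕ) else 2*k+1)
        = (2*k+1)^(n+1) := by
      rw [Fin.prod_univ_succ]
      simp [Fin.succ_ne_zero]
    have h2 : ∀ i : Fin (n+1),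
        (∏ j : Fin (n+2), if i.succ = 0 ∧ j = 0 then (1:ℕ) else 2*k+1) = (2*k+1)^(n+2) := by
      intro i; simp [Fin.succ_ne_zero]
    rw [h0]
    simp only [h2, Finset.prod_const, Finset.card_univ, Fintype.card_fin]
    rw [← pow_mul, ← pow_add]
    congr 1
    ring
  rw [← hcard]
  apply Finset.card_le_card_of_injOn (fun A => fun i j => if i = 0 ∧ j = 0 then (0:ℤ) else A i j)
  · intro A hA
    replace hA := Finset.mem_filter.1 hA
    rw [hTT]
    refine Finset.mem_coe.2 (Fintype.mem_piFinset.2 ?_)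
    intro i
    refine Fintype.mem_piFinset.2 ?_
    intro j
    by_cases h : i = 0 ∧ j = 0
    · simp [h]
    · simp only [if_neg h]
      exact (mem_mbox.1 hA.1) i j
  · intro A hA A' hA' hPhi
    simp only [Finset.coe_filter, Set.mem_setOf_eq] at hA hA'
    have hne : ∀ i j, ¬(i = 0 ∧ j = 0) → A i j = A' i j := by
      intro i j h
      have h2 := congrFun (congrFun hPhi i) j
      simpa [if_neg h] using h2
    have hBeq : A.submatrix Fin.succ Fin.succ = A'.submatrix Fin.succ Fin.succ := by
      ext a b
      exact hne _ _ (by simp [Fin.succ_ne_zero])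
    have hsA : (0:Fin (n+2)).succAbove = Fin.succ := funext fun i => Fin.zero_succAbove i
    have e1 := Matrix.det_succ_row_zero A
    have e2 := Matrix.det_succ_row_zero A'
    rw [Fin.sum_univ_succ] at e1 e2
    rw [hA.2.1] at e1
    rw [hA'.2.1] at e2
    have tails : ∑ j : Fin (n+1),
          ((-1):ℤ)^((j.succ : Fin (n+2)):ℕ) * A 0 j.succ * (A.submatrix Fin.succ j.succ.succAbove).det
        = ∑ j : Fin (n+1),
          ((-1):ℤ)^((j.succ : Fin (n+2)):ℕ) * A' 0 j.succ * (A'.submatrix Fin.succ j.succ.succAbove).det := by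
      refine Finset.sum_congr rfl fun j _ => ?_
      have ha : A 0 j.succ = A' 0 j.succ := hne _ _ (by simp [Fin.succ_ne_zero])
      have hb : A.submatrix Fin.succ j.succ.succAbove = A'.submatrix Fin.succ j.succ.succAbove := by
        ext a b
        exact hne _ _ (by simp [Fin.succ_ne_zero])
      rw [ha, hb]
    rw [hsA] at e1 e2
    rw [hBeq] at e1
    rw [tails] at e1
    have h00 : A 0 0 = A' 0 0 := by
      have hmain : A 0 0 * (A'.submatrix Fin.succ Fin.succ).det
          = A' 0 0 * (A'.submatrix Fin.succ Fin.succ).det := by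
        have := e1.symm.trans e2
        simpa using this
      have hD : (A'.submatrix Fin.succ Fin.succ).det ≠ 0 := hBeq ▸ hA.2.2
      exact mul_right_cancel₀ hD hmain
    funext i j
    by_cases h : i = 0 ∧ j = 0
    · rw [h.1, h.2]; exact h00
    · exact hne i j h

lemma T2_bound (n k : ℕ) :
    (((mbox (n+2) (n+2) k).filter (fun A =>
        (A.submatrix Fin.succ Fin.succ).det = 0)).card : ℕ)
      ≤ ((mbox (n+1) (n+1) k).filter (fun C => C.det = 0)).card * (2*k+1)^(2*n+3) := by
  classical
  set TT := ((mbox (n+1) (n+1) k).filter (fun C => C.det = 0)) ×ˢ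
    ((Fintype.piFinset fun _ : Fin (n+2) => SB k) ×ˢ
     (Fintype.piFinset fun _ : Fin (n+1) => SB k)) with hTT
  have hcard : TT.card = ((mbox (n+1) (n+1) k).filter (fun C => C.det = 0)).card * (2*k+1)^(2*n+3) := by
    rw [hTT, Finset.card_product, Finset.card_product]
    simp only [Fintype.card_piFinset, SB_card, Finset.prod_const, Finset.card_univ,
      Fintype.card_fin]
    rw [← pow_add]
    congr 1
    ring
  rw [← hcard]
  apply Finset.card_le_card_of_injOn
    (fun A => (A.submatrix Fin.succ Fin.succ, (A 0, fun i : Fin (n+1) => A i.succ 0)))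
  · intro A hA
    replace hA := Finset.mem_filter.1 hA
    rw [hTT]
    refine Finset.mem_product.2 ⟨?_, Finset.mem_product.2 ⟨?_, ?_⟩⟩
    · refine Finset.mem_filter.2 ⟨mem_mbox.2 fun i j => ?_, hA.2⟩
      exact (mem_mbox.1 hA.1) _ _
    · exact Fintype.mem_piFinset.2 fun j => (mem_mbox.1 hA.1) 0 j
    · exact Fintype.mem_piFinset.2 fun i => (mem_mbox.1 hA.1) i.succ 0
  · intro A _ A' _ h
    simp only [Prod.mk.injEq] at h
    obtain ⟨hB, hr, hc⟩ := h
    funext i j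
    refine Fin.cases ?_ (fun i' => ?_) i
    · exact congrFun hr j
    · refine Fin.cases ?_ (fun j' => ?_) j
      · exact congrFun hc i'
      · exact congrFun (congrFun hB i') j'

lemma zbound (k : ℕ) : ∀ q, (((mbox (q+1) (q+1) k).filter fun A => A.det = 0).card : ℕ)
    ≤ (q+1) * (2*k+1)^(q^2+2*q) := by
  intro q
  induction q with
  | zero =>
    refine le_trans ?_ (by simp : 1 ≤ (0+1) * (2*k+1)^(0^2+2*0))
    refine Finset.card_le_one.2 fun A hA A' hA' => ?_
    simp only [Finset.mem_filter] at hA hA'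
    funext i j
    have hi : i = 0 := by ext; omega
    have hj : j = 0 := by ext; omega
    have e1 : A.det = A 0 0 := Matrix.det_fin_one A
    have e2 : A'.det = A' 0 0 := Matrix.det_fin_one A'
    rw [hi, hj, ← e1, ← e2, hA.2, hA'.2]
  | succ q ih =>
    have hsub : ((mbox (q+2) (q+2) k).filter fun A => A.det = 0) ⊆
        ((mbox (q+2) (q+2) k).filter (fun A => A.det = 0 ∧
          (A.submatrix Fin.succ Fin.succ).det ≠ 0)) ∪
        ((mbox (q+2) (q+2) k).filter (fun A =>
          (A.submatrix Fin.succ Fin.succ).det = 0)) := by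
      intro A hA
      simp only [Finset.mem_filter] at hA
      by_cases h : (A.submatrix Fin.succ Fin.succ).det = 0
      · exact Finset.mem_union_right _ (Finset.mem_filter.2 ⟨hA.1, h⟩)
      · exact Finset.mem_union_left _ (Finset.mem_filter.2 ⟨hA.1, hA.2, h⟩)
    calc (((mbox (q+2) (q+2) k).filter fun A => A.det = 0).card : ℕ)
        ≤ _ := Finset.card_le_card hsub
      _ ≤ _ + _ := Finset.card_union_le _ _
      _ ≤ (2*k+1)^(q^2+4*q+3) + ((q+1) * (2*k+1)^(q^2+2*q)) * (2*k+1)^(2*q+3) :=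
          Nat.add_le_add (T1_bound q k)
            (le_trans (T2_bound q k) (Nat.mul_le_mul_right _ ih))
      _ = (q+1+1) * (2*k+1)^((q+1)^2+2*(q+1)) := by
          rw [mul_assoc, ← pow_add]
          have h1 : q^2+2*q + (2*q+3) = q^2+4*q+3 := by ring
          have h2 : (q+1)^2+2*(q+1) = q^2+4*q+3 := by ring
          rw [h1, h2]
          ring

lemma rect_bound (m n k : ℕ) (hm : 0 < m) (hmn : m ≤ n) :
    (((mbox n m k).filter fun M =>
        (M.submatrix (Fin.castLE hmn) id).det = 0).card : ℕ)
      ≤ m * (2*k+1)^((m-1)^2 + 2*(m-1) + m*(n-m)) := by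
  classical
  set E := (m-1)^2 + 2*(m-1) + m*(n-m) with hE
  set TT := ((mbox m m k).filter (fun C => C.det = 0)) ×ˢ
    (Fintype.piFinset fun _ : Fin (n-m) => Fintype.piFinset fun _ : Fin m => SB k) with hTT
  have hle : TT.card ≤ m * (2*k+1)^E := by
    rw [hTT, Finset.card_product]
    have h1 : (Fintype.piFinset fun _ : Fin (n-m) =>
        Fintype.piFinset fun _ : Fin m => SB k).card = (2*k+1)^(m*(n-m)) := by
      simp only [Fintype.card_piFinset, SB_card, Finset.prod_const, Finset.card_univ,
        Fintype.card_fin]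
      rw [← pow_mul]
    rw [h1]
    obtain ⟨q, rfl⟩ : ∃ q, m = q + 1 := ⟨m - 1, by omega⟩
    calc ((mbox (q+1) (q+1) k).filter (fun C => C.det = 0)).card * (2*k+1)^((q+1)*(n-(q+1)))
        ≤ ((q+1) * (2*k+1)^(q^2+2*q)) * (2*k+1)^((q+1)*(n-(q+1))) :=
          Nat.mul_le_mul_right _ (zbound k q)
      _ = (q+1) * (2*k+1)^(q^2+2*q+(q+1)*(n-(q+1))) := by rw [mul_assoc, ← pow_add]
      _ = (q+1) * (2*k+1)^E := by
          simp [hE]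
  refine le_trans ?_ hle
  apply Finset.card_le_card_of_injOn
    (fun M => (M.submatrix (Fin.castLE hmn) id,
      fun i : Fin (n-m) => fun j : Fin m => M ⟨m + i, by omega⟩ j))
  · intro M hM
    replace hM := Finset.mem_filter.1 hM
    rw [hTT]
    refine Finset.mem_product.2 ⟨Finset.mem_filter.2 ⟨mem_mbox.2 fun i j =>
      (mem_mbox.1 hM.1) _ _, hM.2⟩, ?_⟩
    exact Fintype.mem_piFinset.2 fun i => Fintype.mem_piFinset.2 fun j =>
      (mem_mbox.1 hM.1) _ _
  · intro M _ M' _ h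
    simp only [Prod.mk.injEq] at h
    obtain ⟨hB, hr⟩ := h
    funext i j
    by_cases hi : (i : ℕ) < m
    · have := congrFun (congrFun hB ⟨(i:ℕ), hi⟩) j
      simpa [Matrix.submatrix, Fin.castLE, Fin.ext_iff] using this
    · have h2 : (i:ℕ) - m < n - m := by omega
      have := congrFun (congrFun hr ⟨(i:ℕ) - m, h2⟩) j
      have heq : (⟨m + ((i:ℕ) - m), by omega⟩ : Fin n) = i := by ext; simp; omega
      rwa [heq] at this


/-- A random `n × m` integer matrix (`m ≤ n`) is of full rank (i.e. some
`m × m` minor is nonzero) with probability 1. -/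
theorem stmt11 (m n : ℕ) (hm : 0 < m) (hmn : m ≤ n) :
    Tendsto (fun k : ℕ =>
      (Nat.card {M : Matrix (Fin n) (Fin m) ℤ //
          (∀ i j, M i j ∈ Set.Icc (-(k : ℤ)) (k : ℤ)) ∧
          ∃ f : Fin m → Fin n, StrictMono f ∧ (M.submatrix f id).det ≠ 0} : ℝ)
        / (2 * (k : ℝ) + 1) ^ (n * m)) atTop (nhds 1) := by
  classical
  set E := (m-1)^2 + 2*(m-1) + m*(n-m) with hE
  have hEnm : E + 1 = n * m := by
    obtain ⟨q, rfl⟩ : ∃ q, m = q + 1 := ⟨m - 1, by omega⟩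
    obtain ⟨t, rfl⟩ : ∃ t, n = (q + 1) + t := ⟨n - (q+1), by omega⟩
    simp only [hE, Nat.add_sub_cancel_left, Nat.add_sub_cancel]
    ring
  -- identify Nat.card with a finset card
  have hcard : ∀ k : ℕ, (Nat.card {M : Matrix (Fin n) (Fin m) ℤ //
          (∀ i j, M i j ∈ Set.Icc (-(k : ℤ)) (k : ℤ)) ∧
          ∃ f : Fin m → Fin n, StrictMono f ∧ (M.submatrix f id).det ≠ 0})
      = ((mbox n m k).filter fun M =>
          ∃ f : Fin m → Fin n, StrictMono f ∧ (M.submatrix f id).det ≠ 0).card := by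
    intro k
    have hset : {M : Matrix (Fin n) (Fin m) ℤ |
          (∀ i j, M i j ∈ Set.Icc (-(k : ℤ)) (k : ℤ)) ∧
          ∃ f : Fin m → Fin n, StrictMono f ∧ (M.submatrix f id).det ≠ 0}
        = ↑((mbox n m k).filter fun M =>
          ∃ f : Fin m → Fin n, StrictMono f ∧ (M.submatrix f id).det ≠ 0) := by
      ext M
      simp only [Set.mem_setOf_eq, Finset.coe_filter, mem_mbox, SB, Finset.mem_Icc,
        Set.mem_Icc]
    calc Nat.card {M : Matrix (Fin n) (Fin m) ℤ //
          (∀ i j, M i j ∈ Set.Icc (-(k : ℤ)) (k : ℤ)) ∧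
          ∃ f : Fin m → Fin n, StrictMono f ∧ (M.submatrix f id).det ≠ 0}
        = Set.ncard {M : Matrix (Fin n) (Fin m) ℤ |
          (∀ i j, M i j ∈ Set.Icc (-(k : ℤ)) (k : ℤ)) ∧
          ∃ f : Fin m → Fin n, StrictMono f ∧ (M.submatrix f id).det ≠ 0} :=
          Nat.card_coe_set_eq _
      _ = _ := by rw [hset, Set.ncard_coe_finset]
  have hub : ∀ k : ℕ, (((mbox n m k).filter fun M =>
      ∃ f : Fin m → Fin n, StrictMono f ∧ (M.submatrix f id).det ≠ 0).card : ℕ)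
      ≤ (2*k+1)^(n*m) := fun k =>
    le_trans (Finset.card_le_card (Finset.filter_subset _ _)) (le_of_eq (mbox_card n m k))
  have hlb : ∀ k : ℕ, (2*k+1)^(n*m) ≤ ((mbox n m k).filter fun M =>
      ∃ f : Fin m → Fin n, StrictMono f ∧ (M.submatrix f id).det ≠ 0).card
      + m * (2*k+1)^E := by
    intro k
    have hsplit := Finset.card_filter_add_card_filter_not
      (s := mbox n m k) (p := fun M => (M.submatrix (Fin.castLE hmn) id).det = 0)
    have hsub : (mbox n m k).filter (fun M => ¬ (M.submatrix (Fin.castLE hmn) id).det = 0)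
        ⊆ (mbox n m k).filter fun M =>
          ∃ f : Fin m → Fin n, StrictMono f ∧ (M.submatrix f id).det ≠ 0 := by
      intro M hM
      simp only [Finset.mem_filter] at hM ⊢
      exact ⟨hM.1, Fin.castLE hmn, Fin.strictMono_castLE hmn, hM.2⟩
    calc (2*k+1)^(n*m) = (mbox n m k).card := (mbox_card n m k).symm
      _ = _ := hsplit.symm
      _ ≤ ((mbox n m k).filter fun M =>
            ∃ f : Fin m → Fin n, StrictMono f ∧ (M.submatrix f id).det ≠ 0).card
          + m * (2*k+1)^E := by
          rw [add_comm]
          exact Nat.add_le_add (Finset.card_le_card hsub) (rect_bound m n k hm hmn)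
  have h1 : Tendsto (fun k : ℕ => 2*(k:ℝ)+1) atTop atTop :=
    tendsto_atTop_add_const_right _ 1
      (Tendsto.const_mul_atTop two_pos tendsto_natCast_atTop_atTop)
  have h2 : Tendsto (fun k : ℕ => (m:ℝ)/(2*(k:ℝ)+1)) atTop (nhds 0) :=
    Tendsto.div_atTop tendsto_const_nhds h1
  have h3 : Tendsto (fun k : ℕ => 1 - (m:ℝ)/(2*(k:ℝ)+1)) atTop (nhds 1) := by
    simpa using tendsto_const_nhds.sub h2
  refine tendsto_of_tendsto_of_tendsto_of_le_of_le h3 tendsto_const_nhds ?_ ?_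
  · intro k
    have hNpos : (0:ℝ) < 2*(k:ℝ)+1 := by positivity
    have hNcast : ((2*k+1 : ℕ) : ℝ) = 2*(k:ℝ)+1 := by push_cast; ring
    dsimp only
    rw [hcard k]
    have hreal : (2*(k:ℝ)+1)^(n*m) - m * (2*(k:ℝ)+1)^E
        ≤ (((mbox n m k).filter fun M =>
          ∃ f : Fin m → Fin n, StrictMono f ∧ (M.submatrix f id).det ≠ 0).card : ℝ) := by
      rw [sub_le_iff_le_add, ← hNcast]
      exact_mod_cast hlb k
    have heq : 1 - (m:ℝ)/(2*(k:ℝ)+1)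
        = ((2*(k:ℝ)+1)^(n*m) - m * (2*(k:ℝ)+1)^E) / (2*(k:ℝ)+1)^(n*m) := by
      rw [← hEnm, pow_succ]
      field_simp
    rw [heq]
    exact div_le_div_of_nonneg_right hreal (by positivity) |>.trans_eq rfl
  · intro k
    have hNpos : (0:ℝ) < 2*(k:ℝ)+1 := by positivity
    have hNcast : ((2*k+1 : ℕ) : ℝ) = 2*(k:ℝ)+1 := by push_cast; ring
    dsimp only
    rw [hcard k, div_le_one (by positivity)]
    calc (((mbox n m k).filter fun M =>
          ∃ f : Fin m → Fin n, StrictMono f ∧ (M.submatrix f id).det ≠ 0).card : ℝ)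
        ≤ (((2*k+1)^(n*m) : ℕ) : ℝ) := by exact_mod_cast hub k
      _ = (2*(k:ℝ)+1)^(n*m) := by rw [Nat.cast_pow, hNcast]
end

section
/- For an integer n ≥ 2, define Z_n := (∏_{i=2}^{n} ζ(i))^{−1} · ∏_{p prime} (1 + p^{−2} + p^{−3} + ⋯ + p^{−n}). Then the sequence (Z_n)_{n ≥ 2} is strictly decreasing: Z_{n+1} < Z_n for every n ≥ 2. -/
open Real Finset

section aux

variable {ι : Type*}

lemma my_tprod_eq_exp (f : ι → ℝ) (hf : ∀ i, 0 < f i)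
    (hs : Summable fun i => Real.log (f i)) :
    ∏' i, f i = Real.exp (∑' i, Real.log (f i)) := by
  exact (Real.rexp_tsum_eq_tprod hf hs).symm

lemma my_multipliable (f : ι → ℝ) (hf : ∀ i, 0 < f i)
    (hs : Summable fun i => Real.log (f i)) : Multipliable f :=
  Real.multipliable_of_summable_log hf hs

lemma my_tprod_lt_tprod (f g : ι → ℝ) (hf : ∀ i, 0 < f i) (hle : ∀ i, f i ≤ g i)
    (i0 : ι) (hlt : f i0 < g i0)
    (hsf : Summable fun i => Real.log (f i)) (hsg : Summable fun i => Real.log (g i)) :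
    ∏' i, f i < ∏' i, g i := by
  have hg : ∀ i, 0 < g i := fun i => lt_of_lt_of_le (hf i) (hle i)
  rw [my_tprod_eq_exp f hf hsf, my_tprod_eq_exp g hg hsg]
  exact Real.exp_lt_exp.mpr <| Summable.tsum_lt_tsum (fun i => Real.log_le_log (hf i) (hle i))
    (Real.log_lt_log (hf i0) hlt) hsf hsg

end aux

/-- summability of `p ↦ p⁻ᵏ` over primes, `k ≥ 2`. -/
lemma summable_primes_pow {k : ℕ} (hk : 2 ≤ k) :
    Summable fun p : Nat.Primes => (((p : ℕ) : ℝ) ^ k)⁻¹ := by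
  have h : Summable fun m : ℕ => ((m : ℝ) ^ k)⁻¹ :=
    Real.summable_nat_pow_inv.mpr (by omega)
  exact h.comp_injective Nat.Primes.coe_nat_injective

/-- the completely multiplicative function `m ↦ (m^k)⁻¹` on `ℕ`, `k ≥ 1`. -/
noncomputable def zf (k : ℕ) (hk : 1 ≤ k) : ℕ →*₀ ℝ where
  toFun m := ((m : ℝ) ^ k)⁻¹
  map_zero' := by
    simp [zero_pow (by omega : k ≠ 0)]
  map_one' := by simp
  map_mul' x y := by push_cast; rw [mul_pow, mul_inv]

/-- real Euler product for zeta. -/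
lemma euler_zeta {k : ℕ} (hk : 2 ≤ k) :
    ∏' p : Nat.Primes, (1 - (((p : ℕ) : ℝ) ^ k)⁻¹)⁻¹ = ∑' j : ℕ+, ((j : ℝ) ^ k)⁻¹ := by
  have hsum : Summable fun m : ℕ => ‖zf k (by omega) m‖ := by
    have h : Summable fun m : ℕ => ((m : ℝ) ^ k)⁻¹ :=
      Real.summable_nat_pow_inv.mpr (by omega)
    refine h.congr fun m => ?_
    simp [zf, abs_of_nonneg (by positivity : (0:ℝ) ≤ ((m : ℝ) ^ k)⁻¹)]
  have := EulerProduct.eulerProduct_completely_multiplicative_tprod hsum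
  have h2 : ∑' j : ℕ+, ((j : ℝ) ^ k)⁻¹ = ∑' m : ℕ, zf k (by omega) m := by
    refine Function.Injective.tsum_eq (f := fun m : ℕ => zf k (by omega) m)
      (fun a b hab => ?_) (fun m hm => ?_)
    · exact PNat.coe_injective hab
    · refine ⟨⟨m, ?_⟩, rfl⟩
      rcases Nat.eq_zero_or_pos m with rfl | h
      · simp [zf] at hm
        omega
      · exact h
  rw [h2, ← this]
  rfl

/-- `Z_n = (∏_{i=2}^{n} ζ(i))⁻¹ · ∏_{p prime} (1 + p⁻² + p⁻³ + ⋯ + p⁻ⁿ)`. -/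
noncomputable def Z (n : ℕ) : ℝ :=
  (∏ i ∈ Finset.Icc 2 n, ∑' j : ℕ+, ((j : ℝ) ^ i)⁻¹)⁻¹ *
    ∏' p : Nat.Primes, (1 + ∑ i ∈ Finset.Icc 2 n, (((p : ℕ) : ℝ) ^ i)⁻¹)

/-- The sequence `(Z_n)_{n ≥ 2}` is strictly decreasing. -/
theorem stmt14 (n : ℕ) (hn : 2 ≤ n) : Z (n + 1) < Z n := by
  have hk : 2 ≤ n + 1 := by omega
  set S : ℕ → Nat.Primes → ℝ := fun m p => ∑ i ∈ Finset.Icc 2 m, (((p : ℕ) : ℝ) ^ i)⁻¹ with hS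
  set x : Nat.Primes → ℝ := fun p => (((p : ℕ) : ℝ) ^ (n + 1))⁻¹ with hx
  -- basic facts about primes
  have hp2 : ∀ p : Nat.Primes, (2 : ℝ) ≤ ((p : ℕ) : ℝ) := fun p => by
    exact_mod_cast p.2.two_le
  have hppos : ∀ p : Nat.Primes, (0 : ℝ) < ((p : ℕ) : ℝ) := fun p => by linarith [hp2 p]
  have hx_pos : ∀ p, 0 < x p := fun p => by
    have := hppos p; positivity
  have hx_le : ∀ p, x p ≤ (((p : ℕ) : ℝ) ^ 2)⁻¹ := fun p => by
    apply inv_anti₀ (by have := hppos p; positivity)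
    exact pow_le_pow_right₀ (by linarith [hp2 p]) hk
  have hx_quarter : ∀ p, x p ≤ 1 / 4 := fun p => by
    refine le_trans (hx_le p) ?_
    rw [inv_le_iff_one_le_mul₀ (by have := hppos p; positivity)]
    nlinarith [hp2 p]
  have hS_nonneg : ∀ m p, 0 ≤ S m p := fun m p =>
    Finset.sum_nonneg fun i _ => by have := hppos p; positivity
  -- summabilities
  have hsumS : ∀ m, Summable fun p => S m p := fun m =>
    summable_sum fun i hi => summable_primes_pow (Finset.mem_Icc.mp hi).1
  have hlogB : ∀ m, Summable fun p => Real.log (1 + S m p) := by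
    intro m
    refine Summable.of_nonneg_of_le (fun p => Real.log_nonneg (by linarith [hS_nonneg m p]))
      (fun p => ?_) (hsumS m)
    have := Real.log_le_sub_one_of_pos (x := 1 + S m p) (by linarith [hS_nonneg m p])
    linarith
  have h1x_pos : ∀ p, (0:ℝ) < 1 - x p := fun p => by linarith [hx_quarter p]
  have hζfac_pos : ∀ p, (0:ℝ) < (1 - x p)⁻¹ := fun p => inv_pos.mpr (h1x_pos p)
  have hlogζ : Summable fun p => Real.log ((1 - x p)⁻¹) := by
    refine Summable.of_nonneg_of_le
      (fun p => Real.log_nonneg ((one_le_inv₀ (h1x_pos p)).mpr (by linarith [hx_pos p])))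
      (fun p => ?_) ((summable_primes_pow le_rfl).mul_left 2)
    have h1 := h1x_pos p
    have h2 : (1 - x p)⁻¹ * (1 - x p) = 1 := inv_mul_cancel₀ (ne_of_gt h1)
    have h3 := Real.log_le_sub_one_of_pos (hζfac_pos p)
    have h4 : (1 - x p)⁻¹ ≤ 1 + 2 * x p := by nlinarith [hx_quarter p, hx_pos p]
    calc Real.log ((1 - x p)⁻¹) ≤ (1 - x p)⁻¹ - 1 := h3
    _ ≤ 2 * x p := by linarith
    _ ≤ 2 * (((p : ℕ) : ℝ) ^ 2)⁻¹ := by linarith [hx_le p]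
  have hBpos : ∀ m p, (0:ℝ) < 1 + S m p := fun m p => by linarith [hS_nonneg m p]
  have hgpos : ∀ p, (0:ℝ) < (1 - x p)⁻¹ * (1 + S n p) :=
    fun p => mul_pos (hζfac_pos p) (hBpos n p)
  have hlogg : Summable fun p => Real.log ((1 - x p)⁻¹ * (1 + S n p)) := by
    refine ((hlogζ.add (hlogB n)).congr fun p => ?_)
    rw [Real.log_mul (ne_of_gt (hζfac_pos p)) (ne_of_gt (hBpos n p))]
  -- the key comparison of infinite products
  have hSsucc : ∀ p, S (n + 1) p = S n p + x p := fun p => by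
    simp only [hS, hx]
    rw [Finset.sum_Icc_succ_top hk]
  have key : (∏' p : Nat.Primes, (1 + S (n + 1) p)) <
      (∑' j : ℕ+, ((j : ℝ) ^ (n + 1))⁻¹) * ∏' p : Nat.Primes, (1 + S n p) := by
    rw [← euler_zeta hk, ← Multipliable.tprod_mul (my_multipliable _ hζfac_pos hlogζ)
      (my_multipliable _ (hBpos n) (hlogB n))]
    have hlt : ∀ p : Nat.Primes, 1 + S (n + 1) p < (1 - x p)⁻¹ * (1 + S n p) := by
      intro p
      rw [hSsucc p]
      have h1 := h1x_pos p
      refine lt_of_mul_lt_mul_right ?_ (le_of_lt h1)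
      have h2 : (1 - x p)⁻¹ * (1 + S n p) * (1 - x p) = 1 + S n p := by
        field_simp
      rw [h2]
      nlinarith [hx_pos p, hS_nonneg n p]
    refine my_tprod_lt_tprod _ _ (fun p => hBpos (n+1) p) (fun p => le_of_lt (hlt p))
      ⟨2, Nat.prime_two⟩ (hlt _) ?_ hlogg
    · refine (hlogB (n+1)).congr fun p => rfl
  -- zeta values are positive
  have hζsumm : ∀ i, 2 ≤ i → Summable fun j : ℕ+ => ((j : ℝ) ^ i)⁻¹ := by
    intro i hi
    have h : Summable fun m : ℕ => ((m : ℝ) ^ i)⁻¹ :=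
      Real.summable_nat_pow_inv.mpr (by omega)
    have := h.comp_injective (fun a b hab => PNat.coe_injective hab :
      Function.Injective fun j : ℕ+ => (j : ℕ))
    exact this.congr fun j => by norm_num
  have hζpos : ∀ i, 2 ≤ i → 0 < ∑' j : ℕ+, ((j : ℝ) ^ i)⁻¹ := by
    intro i hi
    refine Summable.tsum_pos (hζsumm i hi) (fun j => by positivity) 1 (by norm_num)
  have hApos : 0 < ∏ i ∈ Finset.Icc 2 n, ∑' j : ℕ+, ((j : ℝ) ^ i)⁻¹ :=
    Finset.prod_pos fun i hi => hζpos i (Finset.mem_Icc.mp hi).1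
  -- assemble
  unfold Z
  rw [Finset.prod_Icc_succ_top hk, mul_inv, mul_assoc]
  refine mul_lt_mul_of_pos_left ?_ (inv_pos.mpr hApos)
  rw [inv_mul_lt_iff₀ (hζpos (n+1) hk)]
  exact key
end

section
/- Let x be a real number with 0 < x ≤ 1/2. Write C(x) := ∏_{j=1}^{∞} (1 − x^j) and, for an integer i ≥ 0, [1/x, i] := ∏_{j=1}^{i} (1 − x^j) (with [1/x, 0] = 1). Then the sequence ℓ ↦ C(x) · Σ_{i=0}^{ℓ} x^{i²}/[1/x, i]² is strictly increasing and converges to 1 as ℓ → ∞; equivalently, Σ_{i=0}^{∞} x^{i²}/(∏_{j=1}^{i} (1 − x^j))² = 1/∏_{j=1}^{∞} (1 − x^j) (Euler's identity). -/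
open Filter

namespace Stmt18
open Finset




noncomputable def P (x : ℝ) (n : ℕ) : ℝ := ∏ j ∈ Finset.Icc 1 n, (1 - x ^ j)

noncomputable def gb (x : ℝ) : ℕ → ℕ → ℝ
  | 0, 0 => 1
  | 0, _ + 1 => 0
  | _ + 1, 0 => 1
  | n + 1, k + 1 => gb x n (k + 1) + x ^ (n - k) * gb x n k

lemma gb_zero_succ (x : ℝ) (t : ℕ) : gb x 0 (t + 1) = 0 := rfl
lemma gb_zero_right (x : ℝ) (n : ℕ) : gb x n 0 = 1 := by
  cases n <;> rfl

lemma gb_succ_succ (x : ℝ) (n k : ℕ) :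
    gb x (n + 1) (k + 1) = gb x n (k + 1) + x ^ (n - k) * gb x n k := rfl

lemma gb_eq_zero (x : ℝ) : ∀ n k, n < k → gb x n k = 0 := by
  intro n
  induction n with
  | zero => intro k hk; obtain ⟨k, rfl⟩ := Nat.exists_eq_add_of_lt hk; rfl
  | succ n ih =>
    intro k hk
    obtain ⟨j, rfl⟩ : ∃ j, k = j + 1 := ⟨k - 1, by omega⟩
    rw [gb_succ_succ, ih _ (by omega), ih _ (by omega)]
    ring

lemma gb_diag (x : ℝ) (n : ℕ) : gb x n n = 1 := by
  induction n with
  | zero => rfl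
  | succ n ih =>
    rw [gb_succ_succ, gb_eq_zero x n (n+1) (by omega), ih, Nat.sub_self]
    ring

lemma P_zero (x : ℝ) : P x 0 = 1 := by simp [P]

lemma P_succ (x : ℝ) (n : ℕ) : P x (n + 1) = P x n * (1 - x ^ (n + 1)) := by
  rw [P, P, Finset.prod_Icc_succ_top (by omega)]

lemma gb_mul_eq (x : ℝ) : ∀ n k, k ≤ n → gb x n k * (P x k * P x (n - k)) = P x n := by
  intro n
  induction n with
  | zero =>
    intro k hk
    interval_cases k
    simp [gb_zero_right, P_zero]
  | succ n ih =>
    intro k hk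
    match k with
    | 0 => simp [gb_zero_right, P_zero]
    | k + 1 =>
      rcases Nat.lt_or_ge k n with h | h
      · -- k + 1 ≤ n
        obtain ⟨d, hd⟩ : ∃ d, n = k + 1 + d := ⟨n - (k+1), by omega⟩
        subst hd
        have h1 := ih (k + 1) (by omega)
        have h2 := ih k (by omega)
        rw [gb_succ_succ]
        have e1 : k + 1 + d - (k + 1) = d := by omega
        have e2 : k + 1 + d - k = d + 1 := by omega
        have e3 : k + 1 + d + 1 - (k + 1) = d + 1 := by omega
        rw [e1] at h1; rw [e2] at h2; rw [e3, e2]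
        rw [P_succ x (k + 1 + d), P_succ x d, P_succ x k]
        rw [P_succ x k] at h1
        rw [P_succ x d] at h2
        linear_combination (1 - x ^ (d + 1)) * h1 + x ^ (d + 1) * (1 - x ^ (k + 1)) * h2
      · -- k = n
        have : k = n := by omega
        subst this
        rw [gb_succ_succ, gb_eq_zero x k (k+1) (by omega), gb_diag, Nat.sub_self,
          Nat.sub_self, P_zero, P_succ]
        ring


lemma vdm (x : ℝ) (hx : x ≠ 0) : ∀ m n k : ℕ, gb x (m + n) k =
    ∑ j ∈ range (k + 1), gb x m j * gb x n (k - j) * x ^ ((j : ℤ) * (n + j) - j * k) := by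
  intro m
  induction m with
  | zero =>
    intro n k
    rw [Finset.sum_eq_single_of_mem 0 (by simp)]
    · simp [gb_zero_right]
    · rintro ⟨⟩ hb hb0
      · omega
      · simp [gb_zero_succ]
  | succ m ih =>
    intro n k
    match k with
    | 0 => simp [gb_zero_right]
    | k + 1 =>
      have hL : m + 1 + n = (m + n) + 1 := by omega
      rw [hL, gb_succ_succ, ih n (k + 1), ih n k, Finset.mul_sum]
      push_cast
      rw [Finset.sum_range_succ' (fun j => gb x (m + 1) j * gb x n (k + 1 - j) *
            x ^ ((j : ℤ) * (n + j) - j * ((k : ℤ) + 1))) (k + 1),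
          Finset.sum_range_succ' (fun j => gb x m j * gb x n (k + 1 - j) *
            x ^ ((j : ℤ) * (n + j) - j * ((k : ℤ) + 1))) (k + 1)]
      simp only [gb_succ_succ, gb_zero_right, Nat.succ_sub_succ]
      push_cast
      rw [show (∑ t ∈ range (k + 1), (gb x m (t + 1) + x ^ (m - t) * gb x m t) *
            gb x n (k - t) * x ^ (((t:ℤ) + 1) * (↑n + (↑t + 1)) - (↑t + 1) * (↑k + 1)))
          = (∑ t ∈ range (k + 1), gb x m (t + 1) * gb x n (k - t) *
              x ^ (((t:ℤ) + 1) * (↑n + (↑t + 1)) - (↑t + 1) * (↑k + 1)))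
            + ∑ t ∈ range (k + 1), x ^ (m - t) * gb x m t * gb x n (k - t) *
              x ^ (((t:ℤ) + 1) * (↑n + (↑t + 1)) - (↑t + 1) * (↑k + 1)) from by
        rw [← Finset.sum_add_distrib]; exact Finset.sum_congr rfl fun t _ => by ring]
      have key : ∀ t ∈ range (k + 1), x ^ (m - t) * gb x m t * gb x n (k - t) *
            x ^ (((t:ℤ) + 1) * (↑n + (↑t + 1)) - (↑t + 1) * (↑k + 1))
          = x ^ (m + n - k) * (gb x m t * gb x n (k - t) * x ^ ((t:ℤ) * (↑n + ↑t) - ↑t * ↑k)) := by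
        intro t ht
        simp only [Finset.mem_range] at ht
        by_cases hm : m < t
        · simp [gb_eq_zero x m t hm]
        · by_cases hn : n < k - t
          · simp [gb_eq_zero x n (k - t) hn]
          · push_neg at hm hn
            have hk : k ≤ m + n := by omega
            rw [← zpow_natCast x (m - t), ← zpow_natCast x (m + n - k)]
            have ha : (x:ℝ) ^ ((m - t : ℕ) : ℤ) *
                  x ^ (((t:ℤ) + 1) * (↑n + (↑t + 1)) - ((t:ℤ) + 1) * (↑k + 1))
                = x ^ ((m + n - k : ℕ) : ℤ) * x ^ ((t:ℤ) * (↑n + ↑t) - ↑t * ↑k) := by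
              rw [← zpow_add₀ hx, ← zpow_add₀ hx]
              congr 1
              push_cast [Nat.cast_sub hm, Nat.cast_sub hk]
              ring
            linear_combination (gb x m t * gb x n (k - t)) * ha
      rw [Finset.sum_congr rfl key]
      rw [← Finset.mul_sum]
      ring

section basic
variable {x : ℝ} (hx0 : 0 < x) (hx : x ≤ 1 / 2)
include hx0 hx

lemma hx1 : x < 1 := by linarith

lemma P_pos (n : ℕ) : 0 < P x n := by
  refine Finset.prod_pos fun j hj => ?_
  simp only [Finset.mem_Icc] at hj
  have : x ^ j < 1 := pow_lt_one₀ hx0.le (hx1 hx0 hx) (by omega)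
  linarith

lemma P_le_one (n : ℕ) : P x n ≤ 1 := by
  refine Finset.prod_le_one (fun j hj => ?_) (fun j hj => ?_)
  · simp only [Finset.mem_Icc] at hj
    have : x ^ j < 1 := pow_lt_one₀ hx0.le (hx1 hx0 hx) (by omega)
    linarith
  · have : 0 < x ^ j := pow_pos hx0 j
    linarith

lemma P_Ioc (n : ℕ) : P x n = ∏ j ∈ Finset.Ioc 0 n, (1 - x ^ j) := by
  rw [P, ← Finset.Icc_add_one_left_eq_Ioc, zero_add]

lemma P_split {m n : ℕ} (h : m ≤ n) :
    P x n = P x m * ∏ j ∈ Finset.Ioc m n, (1 - x ^ j) := by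
  rw [P_Ioc hx0 hx, P_Ioc hx0 hx, ← Finset.prod_Ioc_consecutive _ (Nat.zero_le m) h]

lemma geom_le_two (K : ℕ) : ∑ i ∈ range K, x ^ i ≤ 2 := by
  induction K with
  | zero => simp
  | succ K ih =>
    rw [geom_sum_succ]
    nlinarith [ih]

lemma sum_Ioc_le {m n : ℕ} (h : m ≤ n) :
    ∑ j ∈ Finset.Ioc m n, x ^ j ≤ 2 * x ^ (m + 1) := by
  have : Finset.Ioc m n = Finset.Ico (m + 1) (n + 1) := by
    rw [Finset.Ico_add_one_add_one_eq_Ioc]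
  rw [this, Finset.sum_Ico_eq_sum_range]
  have : ∀ i ∈ range (n + 1 - (m + 1)), x ^ (m + 1 + i) = x ^ (m + 1) * x ^ i := by
    intro i _; rw [pow_add]
  rw [Finset.sum_congr rfl this, ← Finset.mul_sum]
  have h2 := geom_le_two hx0 hx (n + 1 - (m + 1))
  have hp : 0 < x ^ (m + 1) := pow_pos hx0 _
  nlinarith

omit hx0 hx in
lemma one_sub_sum_le_prod (s : Finset ℕ) (f : ℕ → ℝ) (h0 : ∀ i ∈ s, 0 ≤ f i)
    (h1 : ∀ i ∈ s, f i ≤ 1) : 1 - ∑ i ∈ s, f i ≤ ∏ i ∈ s, (1 - f i) := by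
  classical
  induction s using Finset.induction_on with
  | empty => simp
  | @insert a s ha ih =>
    rw [Finset.sum_insert ha, Finset.prod_insert ha]
    have ih' := ih (fun i hi => h0 i (Finset.mem_insert_of_mem hi))
      (fun i hi => h1 i (Finset.mem_insert_of_mem hi))
    have ha0 := h0 a (Finset.mem_insert_self a s)
    have ha1 := h1 a (Finset.mem_insert_self a s)
    have hs0 : 0 ≤ ∑ i ∈ s, f i := Finset.sum_nonneg fun i hi => h0 i (Finset.mem_insert_of_mem hi)
    nlinarith [ih']

lemma P_tail {m n : ℕ} (h : m ≤ n) : P x m * (1 - 2 * x ^ (m + 1)) ≤ P x n := by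
  rw [P_split hx0 hx h]
  have h1 : 1 - ∑ j ∈ Finset.Ioc m n, x ^ j ≤ ∏ j ∈ Finset.Ioc m n, (1 - x ^ j) :=
    one_sub_sum_le_prod _ _ (fun i _ => (pow_pos hx0 i).le)
      (fun i hi => (pow_lt_one₀ hx0.le (hx1 hx0 hx)
        (by have := Finset.mem_Ioc.mp hi; omega)).le)
  have h2 := sum_Ioc_le hx0 hx h
  have h3 := (P_pos hx0 hx m)
  nlinarith

lemma P_anti {m n : ℕ} (h : m ≤ n) : P x n ≤ P x m := by
  rw [P_split hx0 hx h]
  have h1 : ∏ j ∈ Finset.Ioc m n, (1 - x ^ j) ≤ 1 := by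
    refine Finset.prod_le_one (fun j hj => ?_) (fun j hj => ?_)
    · simp only [Finset.mem_Ioc] at hj
      have : x ^ j < 1 := pow_lt_one₀ hx0.le (hx1 hx0 hx) (by omega)
      linarith
    · nlinarith [pow_pos hx0 j]
  nlinarith [P_pos hx0 hx m]

lemma P_ge_quarter (n : ℕ) : 1 / 4 ≤ P x n := by
  rcases Nat.eq_zero_or_pos n with rfl | hn
  · simp [P]; norm_num
  · have h := P_tail hx0 hx (show 1 ≤ n from hn)
    have h1 : P x 1 = 1 - x := by simp [P]
    rw [h1, show x ^ (1 + 1) = x * x from by ring] at h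
    nlinarith [mul_nonneg (by linarith : (0:ℝ) ≤ 1/2 - x)
      (by nlinarith : (0:ℝ) ≤ 3/2 + x - 2*(x*x))]

end basic


section withC
variable {x : ℝ} {C : ℝ} (hx0 : 0 < x) (hx : x ≤ 1 / 2)
  (hC : Tendsto (P x) atTop (nhds C))
include hx0 hx

lemma gb_closed {n k : ℕ} (h : k ≤ n) : gb x n k = P x n / (P x k * P x (n - k)) := by
  rw [eq_div_iff (mul_ne_zero (P_pos hx0 hx k).ne' (P_pos hx0 hx (n - k)).ne')]
  exact gb_mul_eq x n k h

lemma eqF {m l : ℕ} (h : l ≤ m) : P x (m + l) / (P x l * P x m) =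
    ∑ j ∈ range (l + 1),
      P x m / (P x j * P x (m - j)) * (P x l / (P x (l - j) * P x j)) * x ^ (j * j) := by
  have hv := vdm x hx0.ne' m l l
  rw [gb_closed hx0 hx (show l ≤ m + l by omega), show m + l - l = m from by omega] at hv
  rw [hv]
  refine Finset.sum_congr rfl fun j hj => ?_
  have hjl : j ≤ l := by have := Finset.mem_range.mp hj; omega
  rw [gb_closed hx0 hx (le_trans hjl h), gb_closed hx0 hx (Nat.sub_le l j),
    Nat.sub_sub_self hjl,
    show ((j : ℤ) * (↑l + ↑j) - ↑j * ↑l) = ((j * j : ℕ) : ℤ) from by push_cast; ring,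
    zpow_natCast]

include hC

lemma C_le_P (m : ℕ) : C ≤ P x m :=
  le_of_tendsto hC (eventually_atTop.2 ⟨m, fun _ hk => P_anti hx0 hx hk⟩)

lemma C_ge (m : ℕ) : P x m * (1 - 2 * x ^ (m + 1)) ≤ C :=
  ge_of_tendsto hC (eventually_atTop.2 ⟨m, fun _ hk => P_tail hx0 hx hk⟩)

lemma C_pos : 0 < C := by
  refine lt_of_lt_of_le ?_ (C_ge hx0 hx hC 2)
  have h1 := P_pos hx0 hx 2
  have h2 : x ^ (2 + 1) ≤ (1/2) ^ 3 := by
    rw [show (2 + 1 : ℕ) = 3 from rfl]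
    exact pow_le_pow_left₀ hx0.le hx 3
  have : (0:ℝ) < 1 - 2 * x ^ (2 + 1) := by norm_num at h2 ⊢; nlinarith
  positivity

lemma P_sub_C (m : ℕ) : P x m - C ≤ 2 * x ^ (m + 1) := by
  have h1 := C_ge hx0 hx hC m
  have h2 := P_le_one hx0 hx m
  have h3 := pow_pos hx0 (m + 1)
  have h4 := P_pos hx0 hx m
  nlinarith

lemma key_id (l : ℕ) :
    1 = ∑ j ∈ range (l + 1), x ^ (j * j) / (P x j) ^ 2 * ((P x l) ^ 2 / P x (l - j)) := by
  have hPl := P_pos hx0 hx l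
  have hC0 := C_pos hx0 hx hC
  have h1 : Tendsto (fun m => P x (m + l) / (P x l * P x m)) atTop
      (nhds (C / (P x l * C))) :=
    Tendsto.div ((tendsto_add_atTop_iff_nat l).mpr hC) (tendsto_const_nhds.mul hC)
      (mul_ne_zero hPl.ne' hC0.ne')
  have h2 : Tendsto (fun m => ∑ j ∈ range (l + 1),
      P x m / (P x j * P x (m - j)) * (P x l / (P x (l - j) * P x j)) * x ^ (j * j)) atTop
      (nhds (∑ j ∈ range (l + 1),
      C / (P x j * C) * (P x l / (P x (l - j) * P x j)) * x ^ (j * j))) := by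
    refine tendsto_finset_sum _ fun j _ => ?_
    refine Tendsto.mul (Tendsto.mul ?_ tendsto_const_nhds) tendsto_const_nhds
    exact Tendsto.div hC (tendsto_const_nhds.mul (hC.comp (tendsto_sub_atTop_nat j)))
      (mul_ne_zero (P_pos hx0 hx j).ne' hC0.ne')
  have heq : (fun m => P x (m + l) / (P x l * P x m)) =ᶠ[atTop]
      (fun m => ∑ j ∈ range (l + 1),
      P x m / (P x j * P x (m - j)) * (P x l / (P x (l - j) * P x j)) * x ^ (j * j)) :=
    eventually_atTop.2 ⟨l, fun m hm => eqF hx0 hx hm⟩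
  have hu : C / (P x l * C) = ∑ j ∈ range (l + 1),
      C / (P x j * C) * (P x l / (P x (l - j) * P x j)) * x ^ (j * j) :=
    tendsto_nhds_unique (h1.congr' heq) h2
  calc (1:ℝ) = P x l * (C / (P x l * C)) := by field_simp
    _ = P x l * ∑ j ∈ range (l + 1),
        C / (P x j * C) * (P x l / (P x (l - j) * P x j)) * x ^ (j * j) := by rw [← hu]
    _ = ∑ j ∈ range (l + 1), x ^ (j * j) / (P x j) ^ 2 * ((P x l) ^ 2 / P x (l - j)) := by
        rw [Finset.mul_sum]
        refine Finset.sum_congr rfl fun j hj => ?_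
        have h1 := P_pos hx0 hx j
        have h2 := P_pos hx0 hx (l - j)
        field_simp

lemma Dbound {l j : ℕ} (hj : j ≤ l) :
    |(P x l) ^ 2 / P x (l - j) - C| ≤ 2 * x ^ (l - j + 1) := by
  have hp := P_pos hx0 hx (l - j)
  have hl := P_pos hx0 hx l
  have hPl : P x l ≤ P x (l - j) := P_anti hx0 hx (Nat.sub_le l j)
  have hCl := C_le_P hx0 hx hC l
  have hClj := C_le_P hx0 hx hC (l - j)
  have hC0 := C_pos hx0 hx hC
  have hsub1 := P_sub_C hx0 hx hC l
  have hsub2 := P_sub_C hx0 hx hC (l - j)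
  have hle1 := P_le_one hx0 hx (l - j)
  have hxp : x ^ (l + 1) ≤ x ^ (l - j + 1) :=
    pow_le_pow_of_le_one hx0.le (by linarith) (by omega)
  rw [abs_le]
  constructor
  · have key : (C - 2 * x ^ (l - j + 1)) * P x (l - j) ≤ (P x l) ^ 2 := by
      have h₁ : C * (P x (l - j) - C) ≤ P x (l - j) * (P x (l - j) - C) :=
        mul_le_mul_of_nonneg_right hClj (by linarith)
      have h₂ : P x (l - j) * (P x (l - j) - C) ≤ P x (l - j) * (2 * x ^ (l - j + 1)) :=
        mul_le_mul_of_nonneg_left hsub2 hp.le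
      have h₃ : C * C ≤ P x l * P x l := mul_le_mul hCl hCl hC0.le hl.le
      nlinarith
    have := (le_div_iff₀ hp).mpr key
    linarith
  · have key : (P x l) ^ 2 ≤ (C + 2 * x ^ (l - j + 1)) * P x (l - j) := by
      have h₁ : P x l * P x l ≤ P x (l - j) * P x l := mul_le_mul_of_nonneg_right hPl hl.le
      have h₂ : P x (l - j) * P x l ≤ P x (l - j) * (C + 2 * x ^ (l - j + 1)) :=
        mul_le_mul_of_nonneg_left (by nlinarith) hp.le
      nlinarith
    have := (div_le_iff₀ hp).mpr key
    linarith

lemma est (l : ℕ) :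
    |1 - C * ∑ i ∈ range (l + 1), x ^ (i ^ 2) / (P x i) ^ 2|
      ≤ 32 * (l + 1) * x ^ (l + 1) := by
  have hkey := key_id hx0 hx hC l
  have hdiff : 1 - C * ∑ i ∈ range (l + 1), x ^ (i ^ 2) / (P x i) ^ 2
      = ∑ j ∈ range (l + 1),
          x ^ (j * j) / (P x j) ^ 2 * ((P x l) ^ 2 / P x (l - j) - C) := by
    rw [Finset.mul_sum]
    nth_rewrite 1 [hkey]
    rw [← Finset.sum_sub_distrib]
    refine Finset.sum_congr rfl fun j hj => ?_
    rw [show j ^ 2 = j * j from sq j]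
    ring
  rw [hdiff]
  refine (Finset.abs_sum_le_sum_abs _ _).trans ?_
  have hbound : ∀ j ∈ range (l + 1),
      |x ^ (j * j) / (P x j) ^ 2 * ((P x l) ^ 2 / P x (l - j) - C)| ≤ 32 * x ^ (l + 1) := by
    intro j hj
    have hjl : j ≤ l := by have := Finset.mem_range.mp hj; omega
    have hPj := P_pos hx0 hx j
    have hq := P_ge_quarter hx0 hx j
    rw [abs_mul]
    have ha : |x ^ (j * j) / (P x j) ^ 2| = x ^ (j * j) / (P x j) ^ 2 :=
      abs_of_nonneg (by positivity)
    rw [ha]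
    have hb := Dbound hx0 hx hC hjl
    have h1 : x ^ (j * j) / (P x j) ^ 2 ≤ 16 * x ^ (j * j) := by
      rw [div_le_iff₀ (by positivity)]
      nlinarith [pow_pos hx0 (j * j), sq_nonneg (P x j - 1/4)]
    have h2 : x ^ (j * j) / (P x j) ^ 2 * |(P x l) ^ 2 / P x (l - j) - C|
        ≤ 16 * x ^ (j * j) * (2 * x ^ (l - j + 1)) :=
      mul_le_mul h1 hb (abs_nonneg _) (by positivity)
    refine h2.trans ?_
    have h3 : x ^ (j * j) * x ^ (l - j + 1) = x ^ (j * j + (l - j + 1)) := (pow_add x _ _).symm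
    have h4 : x ^ (j * j + (l - j + 1)) ≤ x ^ (l + 1) :=
      pow_le_pow_of_le_one hx0.le (by linarith) (by nlinarith [Nat.sub_add_cancel hjl])
    nlinarith [pow_pos hx0 (j * j + (l - j + 1))]
  calc ∑ j ∈ range (l + 1), |x ^ (j * j) / (P x j) ^ 2 * ((P x l) ^ 2 / P x (l - j) - C)|
      ≤ ∑ _j ∈ range (l + 1), 32 * x ^ (l + 1) := Finset.sum_le_sum hbound
    _ = 32 * (l + 1) * x ^ (l + 1) := by
        rw [Finset.sum_const, Finset.card_range, nsmul_eq_mul]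
        push_cast; ring

end withC

end Stmt18

/-- Euler's identity: for `0 < x ≤ 1/2`, with `C(x) = ∏_{j=1}^{∞} (1 - x^j)`
and `[1/x, i] = ∏_{j=1}^{i} (1 - x^j)`, the sequence
`ℓ ↦ C(x)·∑_{i=0}^{ℓ} x^{i²}/[1/x,i]²` is strictly increasing and converges
to 1; equivalently `∑_{i=0}^{∞} x^{i²}/[1/x,i]² = C(x)⁻¹`. -/
theorem stmt18 (x : ℝ) (hx0 : 0 < x) (hx : x ≤ 1 / 2) (C : ℝ)
    (hC : Tendsto (fun k : ℕ => ∏ j ∈ Finset.Icc 1 k, (1 - x ^ j)) atTop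
      (nhds C)) :
    StrictMono (fun l : ℕ => C * ∑ i ∈ Finset.range (l + 1),
      x ^ (i ^ 2) / (∏ j ∈ Finset.Icc 1 i, (1 - x ^ j)) ^ 2) ∧
    Tendsto (fun l : ℕ => C * ∑ i ∈ Finset.range (l + 1),
      x ^ (i ^ 2) / (∏ j ∈ Finset.Icc 1 i, (1 - x ^ j)) ^ 2) atTop (nhds 1) ∧
    (∑' i : ℕ, x ^ (i ^ 2) / (∏ j ∈ Finset.Icc 1 i, (1 - x ^ j)) ^ 2) = C⁻¹ := by
  have hC' : Tendsto (Stmt18.P x) atTop (nhds C) := hC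
  have hPdef : ∀ i : ℕ, (∏ j ∈ Finset.Icc 1 i, (1 - x ^ j)) = Stmt18.P x i := fun _ => rfl
  have hC0 : 0 < C := Stmt18.C_pos hx0 hx hC'
  have hterm : ∀ i : ℕ, 0 < x ^ (i ^ 2) / (Stmt18.P x i) ^ 2 := fun i => by
    have := Stmt18.P_pos hx0 hx i
    positivity
  have hmono : StrictMono (fun l : ℕ => C * ∑ i ∈ Finset.range (l + 1),
      x ^ (i ^ 2) / (∏ j ∈ Finset.Icc 1 i, (1 - x ^ j)) ^ 2) := by
    refine strictMono_nat_of_lt_succ fun l => ?_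
    simp only [hPdef]
    rw [Finset.sum_range_succ _ (l + 1)]
    have h := hterm (l + 1)
    nlinarith [Finset.sum_pos (fun i (_ : i ∈ Finset.range (l+1)) => hterm i) (by simp)]
  have hb : Tendsto (fun l : ℕ => 32 * ((l : ℝ) + 1) * x ^ (l + 1)) atTop (nhds 0) := by
    have h1 : Tendsto (fun n : ℕ => 32 * ((n : ℝ) ^ 1 * x ^ n)) atTop (nhds (32 * 0)) :=
      (tendsto_pow_const_mul_const_pow_of_abs_lt_one 1
        (by rw [abs_of_pos hx0]; linarith)).const_mul 32
    rw [mul_zero] at h1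
    have h2 : Tendsto (fun n : ℕ => 32 * ((n : ℝ)) * x ^ n) atTop (nhds 0) := by
      refine h1.congr fun n => by ring
    have := (tendsto_add_atTop_iff_nat 1).mpr h2
    refine this.congr fun l => by push_cast; ring
  have htend : Tendsto (fun l : ℕ => C * ∑ i ∈ Finset.range (l + 1),
      x ^ (i ^ 2) / (∏ j ∈ Finset.Icc 1 i, (1 - x ^ j)) ^ 2) atTop (nhds 1) := by
    rw [tendsto_iff_dist_tendsto_zero]
    refine squeeze_zero (fun l => dist_nonneg) (fun l => ?_) hb
    rw [Real.dist_eq, abs_sub_comm]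
    simp only [hPdef]
    exact Stmt18.est hx0 hx hC' l
  refine ⟨hmono, htend, ?_⟩
  have htS : Tendsto (fun l : ℕ => ∑ i ∈ Finset.range (l + 1),
      x ^ (i ^ 2) / (Stmt18.P x i) ^ 2) atTop (nhds C⁻¹) := by
    have h := htend.const_mul C⁻¹
    rw [mul_one] at h
    refine h.congr fun l => ?_
    simp only [hPdef]
    field_simp
  have htS' : Tendsto (fun n : ℕ => ∑ i ∈ Finset.range n,
      x ^ (i ^ 2) / (Stmt18.P x i) ^ 2) atTop (nhds C⁻¹) :=
    (tendsto_add_atTop_iff_nat 1).mp htS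
  have hhs : HasSum (fun i : ℕ => x ^ (i ^ 2) / (Stmt18.P x i) ^ 2) C⁻¹ :=
    (hasSum_iff_tendsto_nat_of_nonneg (fun i => (hterm i).le) _).mpr htS'
  simpa only [hPdef] using hhs.tsum_eq
end
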